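/- arXiv:2605.15821 — 6 statements merged into one kernel-verified Lean document; each statement's English description precedes it below -/
import Mathlib

section
/- Let f be a real polynomial in n variables with deg f = d. Then ‖f‖_{1,coef} − f belongs to the truncated preprime R(1 ± x)_d. -/
open MvPolynomial

noncomputable section

/-- A polynomial is a sum of squares. -/
def IsSOS {n : ℕ} (p : MvPolynomial (Fin n) ℝ) : Prop :=
  ∃ (k : ℕ) (q : Fin k → MvPolynomial (Fin n) ℝ), p = ∑ i, q i ^ 2

/-- The truncated quadratic module `Q(g)_r`. -/
def QM {n : ℕ} {ι : Type} [Fintype ι] (g : ι → MvPolynomial (Fin n) ℝ) (r : ℕ) :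
    Set (MvPolynomial (Fin n) ℝ) :=
  { p | ∃ (σ₀ : MvPolynomial (Fin n) ℝ) (σ : ι → MvPolynomial (Fin n) ℝ),
      IsSOS σ₀ ∧ (∀ j, IsSOS (σ j)) ∧ σ₀.totalDegree ≤ r ∧
      (∀ j, (σ j * g j).totalDegree ≤ r) ∧
      p = σ₀ + ∑ j, σ j * g j }

/-- The truncated preorder `T(g)_r`. -/
def TP {n : ℕ} {ι : Type} [Fintype ι] [DecidableEq ι] (g : ι → MvPolynomial (Fin n) ℝ)
    (r : ℕ) : Set (MvPolynomial (Fin n) ℝ) :=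
  { p | ∃ σ : Finset ι → MvPolynomial (Fin n) ℝ,
      (∀ S, IsSOS (σ S)) ∧ (∀ S : Finset ι, (σ S * ∏ j ∈ S, g j).totalDegree ≤ r) ∧
      p = ∑ S : Finset ι, σ S * ∏ j ∈ S, g j }

/-- The truncated preprime `R(g)_r`. -/
def RP {n : ℕ} {ι : Type} [Fintype ι] (g : ι → MvPolynomial (Fin n) ℝ) (r : ℕ) :
    Set (MvPolynomial (Fin n) ℝ) :=
  { p | ∃ (A : Finset (ι → ℕ)) (s : (ι → ℕ) → ℝ),
      (∀ α ∈ A, 0 ≤ s α) ∧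
      (∀ α ∈ A, s α ≠ 0 → (MvPolynomial.C (s α) * ∏ j, g j ^ α j).totalDegree ≤ r) ∧
      p = ∑ α ∈ A, MvPolynomial.C (s α) * ∏ j, g j ^ α j }

/-- The tuple of the `2n` polynomials `1 ± xᵢ`. -/
def pmX (n : ℕ) : Fin n × Bool → MvPolynomial (Fin n) ℝ :=
  fun q => if q.2 then 1 + MvPolynomial.X q.1 else 1 - MvPolynomial.X q.1

/-- The hypercube `[-1,1]^n`. -/
def Box (n : ℕ) : Set (Fin n → ℝ) := { x | ∀ i, |x i| ≤ 1 }

/-- The hypercube `[0,1]^n`. -/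
def Box01 (n : ℕ) : Set (Fin n → ℝ) := { x | ∀ i, 0 ≤ x i ∧ x i ≤ 1 }

/-- The sup norm of a polynomial on `[-1,1]^n`. -/
def supNorm {n : ℕ} (f : MvPolynomial (Fin n) ℝ) : ℝ :=
  sSup ((fun x => |MvPolynomial.eval x f|) '' Box n)

/-- The sup norm of a polynomial on `[0,1]^n`. -/
def supNorm01 {n : ℕ} (f : MvPolynomial (Fin n) ℝ) : ℝ :=
  sSup ((fun x => |MvPolynomial.eval x f|) '' Box01 n)

/-- The semialgebraic set `S_g`. -/
def Sg {n m : ℕ} (g : Fin m → MvPolynomial (Fin n) ℝ) : Set (Fin n → ℝ) :=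
  { x | ∀ j, 0 ≤ MvPolynomial.eval x (g j) }

/-- The maximum violation function `G`. -/
def Gfun {n m : ℕ} (g : Fin m → MvPolynomial (Fin n) ℝ) (x : Fin n → ℝ) : ℝ :=
  ⨆ j, max 0 (-(MvPolynomial.eval x (g j)))

/-- The squared Euclidean norm of the violation vector `H`. -/
def Hfun {n m : ℕ} (g : Fin m → MvPolynomial (Fin n) ℝ) (x : Fin n → ℝ) : ℝ :=
  ∑ j, max 0 (-(MvPolynomial.eval x (g j))) ^ 2

/-- Euclidean distance from a point to a set. -/
def euclDist {n : ℕ} (x : Fin n → ℝ) (S : Set (Fin n → ℝ)) : ℝ :=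
  sInf ((fun y => Real.sqrt (∑ i, (x i - y i) ^ 2)) '' S)

/-- The minimum of `f` over `S_g`. -/
def fMin {n m : ℕ} (g : Fin m → MvPolynomial (Fin n) ℝ) (f : MvPolynomial (Fin n) ℝ) : ℝ :=
  sInf ((fun x => MvPolynomial.eval x f) '' Sg g)

/-- The ℓ₁ norm of the coefficient vector of `f`. -/
def coeffL1 {n : ℕ} (f : MvPolynomial (Fin n) ℝ) : ℝ :=
  ∑ α ∈ f.support, |MvPolynomial.coeff α f|

/-- The constant `C(N,D)` of the effective Schmüdgen Positivstellensatz on the cube. -/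
def Cconst (N D : ℕ) : ℝ :=
  Real.pi * (N : ℝ) ^ ((1:ℝ)/2) * (Real.sqrt 2 * ((D : ℝ) + 1)) ^ ((N : ℝ)/2 + 1)

end

section AuxStmt3

open MvPolynomial

variable {n : ℕ} {ι : Type} [Fintype ι] {g : ι → MvPolynomial (Fin n) ℝ} {r r' : ℕ}

lemma totalDegree_C_mul' (c : ℝ) (p : MvPolynomial (Fin n) ℝ) :
    (C c * p).totalDegree ≤ p.totalDegree := by
  simpa using totalDegree_mul (C c) p

lemma totalDegree_C_mul_eq {c : ℝ} (hc : c ≠ 0) (p : MvPolynomial (Fin n) ℝ) :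
    (C c * p).totalDegree = p.totalDegree := by
  refine le_antisymm (totalDegree_C_mul' c p) ?_
  have h : p = C c⁻¹ * (C c * p) := by
    rw [← mul_assoc, ← C_mul, inv_mul_cancel₀ hc, C_1, one_mul]
  nth_rewrite 1 [h]
  exact totalDegree_C_mul' _ _

lemma RP.zero_mem : (0 : MvPolynomial (Fin n) ℝ) ∈ RP g r :=
  ⟨∅, fun _ => 0, by simp, by simp, by simp⟩

lemma RP.const_mem {c : ℝ} (hc : 0 ≤ c) : (C c : MvPolynomial (Fin n) ℝ) ∈ RP g r := by
  refine ⟨{fun _ => 0}, fun _ => c, fun _ _ => hc, ?_, ?_⟩ <;> simp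

lemma RP.add_mem {p q : MvPolynomial (Fin n) ℝ} (hp : p ∈ RP g r) (hq : q ∈ RP g r) :
    p + q ∈ RP g r := by
  classical
  obtain ⟨A, s₁, hs₁, hd₁, hp⟩ := hp
  obtain ⟨B, s₂, hs₂, hd₂, hq⟩ := hq
  refine ⟨A ∪ B, fun α => (if α ∈ A then s₁ α else 0) + (if α ∈ B then s₂ α else 0), ?_, ?_, ?_⟩
  · intro α _
    have h1 : (0:ℝ) ≤ if α ∈ A then s₁ α else 0 := by
      by_cases h : α ∈ A
      · simpa [h] using hs₁ α h
      · simp [h]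
    have h2 : (0:ℝ) ≤ if α ∈ B then s₂ α else 0 := by
      by_cases h : α ∈ B
      · simpa [h] using hs₂ α h
      · simp [h]
    positivity
  · intro α _ hα
    refine le_trans (totalDegree_C_mul' _ _) ?_
    have hcase : (α ∈ A ∧ s₁ α ≠ 0) ∨ (α ∈ B ∧ s₂ α ≠ 0) := by
      by_contra h
      push_neg at h
      apply hα
      by_cases hA : α ∈ A <;> by_cases hB : α ∈ B <;>
        simp [hA, hB, h.1, h.2]
    rcases hcase with ⟨hA, h0⟩ | ⟨hB, h0⟩
    · have := hd₁ α hA h0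
      rwa [totalDegree_C_mul_eq h0] at this
    · have := hd₂ α hB h0
      rwa [totalDegree_C_mul_eq h0] at this
  · have e1 : ∑ α ∈ A ∪ B, C (if α ∈ A then s₁ α else 0) * ∏ j, g j ^ α j
        = ∑ α ∈ A, C (s₁ α) * ∏ j, g j ^ α j := by
      rw [show (∑ α ∈ A ∪ B, C (if α ∈ A then s₁ α else 0) * ∏ j, g j ^ α j)
          = ∑ α ∈ A ∪ B, (if α ∈ A then C (s₁ α) * ∏ j, g j ^ α j else 0) from
        Finset.sum_congr rfl fun α _ => by split <;> simp,
        Finset.sum_ite_mem, Finset.union_inter_cancel_left]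
    have e2 : ∑ α ∈ A ∪ B, C (if α ∈ B then s₂ α else 0) * ∏ j, g j ^ α j
        = ∑ α ∈ B, C (s₂ α) * ∏ j, g j ^ α j := by
      rw [show (∑ α ∈ A ∪ B, C (if α ∈ B then s₂ α else 0) * ∏ j, g j ^ α j)
          = ∑ α ∈ A ∪ B, (if α ∈ B then C (s₂ α) * ∏ j, g j ^ α j else 0) from
        Finset.sum_congr rfl fun α _ => by split <;> simp,
        Finset.sum_ite_mem, Finset.union_inter_cancel_right]
    rw [hp, hq, ← e1, ← e2, ← Finset.sum_add_distrib]
    exact Finset.sum_congr rfl fun α _ => by rw [C_add]; ring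

lemma RP.cmul_mem {c : ℝ} (hc : 0 ≤ c) {p : MvPolynomial (Fin n) ℝ} (hp : p ∈ RP g r) :
    C c * p ∈ RP g r := by
  obtain ⟨A, s, hs, hd, hp⟩ := hp
  refine ⟨A, fun α => c * s α, fun α hα => mul_nonneg hc (hs α hα), ?_, ?_⟩
  · intro α hα h0
    have hs0 : s α ≠ 0 := fun h => h0 (by simp [h])
    refine le_trans (totalDegree_C_mul' _ _) ?_
    have := hd α hα hs0
    rwa [totalDegree_C_mul_eq hs0] at this
  · rw [hp, Finset.mul_sum]
    exact Finset.sum_congr rfl fun α _ => by rw [C_mul]; ring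

lemma RP.gmul_mem [DecidableEq ι] (j : ι) (hj : (g j).totalDegree ≤ 1)
    {p : MvPolynomial (Fin n) ℝ} (hp : p ∈ RP g r) : g j * p ∈ RP g (r + 1) := by
  classical
  obtain ⟨A, s, hs, hd, hp⟩ := hp
  set e : ι → ℕ := Pi.single j 1 with he
  have hshift : ∀ α : ι → ℕ, (fun i => (α + e) i - e i) = α := by
    intro α; funext i; simp
  have key : ∀ α : ι → ℕ, ∏ i, g i ^ (α + e) i = (∏ i, g i ^ α i) * g j := by
    intro α
    have h1 : ∀ i, g i ^ (α + e) i = g i ^ α i * (if i = j then g j else 1) := by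
      intro i
      by_cases h : i = j <;> simp [he, h, pow_add, Pi.single_apply]
    rw [Finset.prod_congr rfl (fun i _ => h1 i), Finset.prod_mul_distrib,
      Finset.prod_ite_eq']
    simp
  refine ⟨A.image (· + e), fun β => s (fun i => β i - e i), ?_, ?_, ?_⟩
  · intro β hβ
    obtain ⟨α, hα, rfl⟩ := Finset.mem_image.mp hβ
    simp only [hshift]
    exact hs α hα
  · intro β hβ h0
    obtain ⟨α, hα, rfl⟩ := Finset.mem_image.mp hβ
    simp only [hshift] at h0 ⊢
    calc (C (s α) * ∏ i, g i ^ (α + e) i).totalDegree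
        = ((C (s α) * ∏ i, g i ^ α i) * g j).totalDegree := by rw [key, mul_assoc]
      _ ≤ (C (s α) * ∏ i, g i ^ α i).totalDegree + (g j).totalDegree := totalDegree_mul _ _
      _ ≤ r + 1 := add_le_add (hd α hα h0) hj
  · rw [Finset.sum_image (fun x _ y _ h => by
      have := congrArg (fun z i => z i - e i) h
      simpa only [hshift] using this)]
    rw [hp, Finset.mul_sum]
    refine Finset.sum_congr rfl fun α hα => ?_
    simp only [hshift]
    rw [key]
    ring

lemma RP.mono (h : r ≤ r') : RP g r ⊆ RP g r' := by
  rintro p ⟨A, s, hs, hd, hp⟩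
  exact ⟨A, s, hs, fun α hα h0 => le_trans (hd α hα h0) h, hp⟩

lemma pmX_deg (q : Fin n × Bool) : (pmX n q).totalDegree ≤ 1 := by
  rcases q with ⟨i, b⟩
  cases b <;> simp only [pmX, if_true, if_false, Bool.false_eq_true, sub_eq_add_neg] <;>
    refine le_trans (totalDegree_add _ _) ?_ <;>
    simp [totalDegree_X]

lemma one_pm_pow_mem (k : ℕ) : ∀ α : Fin n → ℕ, (∑ i, α i) = k →
    (1 - ∏ i, X i ^ α i) ∈ RP (pmX n) k ∧ (1 + ∏ i, X i ^ α i) ∈ RP (pmX n) k := by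
  induction k with
  | zero =>
    intro α hα
    have h0 : ∀ i, α i = 0 := by
      intro i
      exact (Finset.sum_eq_zero_iff.mp hα) i (Finset.mem_univ i)
    have hprod : (∏ i, (X i : MvPolynomial (Fin n) ℝ) ^ α i) = 1 := by
      simp [h0]
    rw [hprod]
    constructor
    · simpa using (RP.zero_mem : (0 : MvPolynomial (Fin n) ℝ) ∈ RP (pmX n) 0)
    · have h2 : (1 + 1 : MvPolynomial (Fin n) ℝ) = C 2 := by
        rw [← C_1, ← C_add]; norm_num
      rw [h2]
      exact RP.const_mem (by norm_num)
  | succ k ih =>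
    intro α hα
    have hex : ∃ i, α i ≠ 0 := by
      by_contra h
      push_neg at h
      simp [h] at hα
    obtain ⟨i, hi⟩ := hex
    set α' := Function.update α i (α i - 1) with hα'
    have hsum' : (∑ j, α' j) = k := by
      have h1 : (∑ j, α' j) = (α i - 1) + ∑ j ∈ Finset.univ.erase i, α j := by
        rw [hα']
        rw [← Finset.add_sum_erase _ _ (Finset.mem_univ i)]
        congr 1
        · simp
        · exact Finset.sum_congr rfl fun j hj =>
            Function.update_of_ne (Finset.ne_of_mem_erase hj) _ _
      have h2 : α i + ∑ j ∈ Finset.univ.erase i, α j = k + 1 := by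
        rw [Finset.add_sum_erase _ _ (Finset.mem_univ i)]; exact hα
      omega
    have hm : (∏ j, (X j : MvPolynomial (Fin n) ℝ) ^ α j)
        = (∏ j, X j ^ α' j) * X i := by
      have h1 : ∀ j, (X j : MvPolynomial (Fin n) ℝ) ^ α j
          = X j ^ α' j * (if j = i then X i else 1) := by
        intro j
        by_cases h : j = i
        · subst h
          simp only [if_true, hα', Function.update_self]
          rw [← pow_succ, Nat.sub_add_cancel (Nat.one_le_iff_ne_zero.mpr hi)]
        · simp [h, hα', Function.update_of_ne h]
      rw [Finset.prod_congr rfl (fun j _ => h1 j), Finset.prod_mul_distrib,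
        Finset.prod_ite_eq']
      simp
    set m := ∏ j, (X j : MvPolynomial (Fin n) ℝ) ^ α' j with hmdef
    obtain ⟨ih1, ih2⟩ := ih α' hsum'
    have mem1 : pmX n (i, true) * (1 - m) ∈ RP (pmX n) (k + 1) :=
      RP.gmul_mem (i, true) (pmX_deg _) ih1
    have mem2 : pmX n (i, false) * (1 + m) ∈ RP (pmX n) (k + 1) :=
      RP.gmul_mem (i, false) (pmX_deg _) ih2
    have mem3 : pmX n (i, true) * (1 + m) ∈ RP (pmX n) (k + 1) :=
      RP.gmul_mem (i, true) (pmX_deg _) ih2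
    have mem4 : pmX n (i, false) * (1 - m) ∈ RP (pmX n) (k + 1) :=
      RP.gmul_mem (i, false) (pmX_deg _) ih1
    have hhalf : ∀ q : MvPolynomial (Fin n) ℝ, q = C (1/2 : ℝ) * (C 2 * q) := by
      intro q
      rw [← mul_assoc, ← C_mul]
      norm_num
    have hpt : pmX n (i, true) = 1 + X i := by simp [pmX]
    have hpf : pmX n (i, false) = 1 - X i := by simp [pmX]
    constructor
    · have key : (1 : MvPolynomial (Fin n) ℝ) - ∏ j, X j ^ α j
          = C (1/2 : ℝ) * (pmX n (i, true) * (1 - m))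
            + C (1/2 : ℝ) * (pmX n (i, false) * (1 + m)) := by
        rw [hm, hpt, hpf, ← mul_add, hhalf (1 - m * X i)]
        congr 1
        rw [show (C 2 : MvPolynomial (Fin n) ℝ) = 1 + 1 by rw [← C_1, ← C_add]; norm_num]
        ring
      rw [key]
      exact RP.add_mem (RP.cmul_mem (by norm_num) mem1) (RP.cmul_mem (by norm_num) mem2)
    · have key : (1 : MvPolynomial (Fin n) ℝ) + ∏ j, X j ^ α j
          = C (1/2 : ℝ) * (pmX n (i, true) * (1 + m))
            + C (1/2 : ℝ) * (pmX n (i, false) * (1 - m)) := by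
        rw [hm, hpt, hpf, ← mul_add, hhalf (1 + m * X i)]
        congr 1
        rw [show (C 2 : MvPolynomial (Fin n) ℝ) = 1 + 1 by rw [← C_1, ← C_add]; norm_num]
        ring
      rw [key]
      exact RP.add_mem (RP.cmul_mem (by norm_num) mem3) (RP.cmul_mem (by norm_num) mem4)

end AuxStmt3


/-- `‖f‖_{1,coef} − f ∈ R(1 ± x)_d` where `d = deg f`. -/
theorem stmt3 {n : ℕ} (f : MvPolynomial (Fin n) ℝ) (d : ℕ) (hd : f.totalDegree = d) :
    MvPolynomial.C (coeffL1 f) - f ∈ RP (pmX n) d := by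
  classical
  have hC : (C (coeffL1 f) : MvPolynomial (Fin n) ℝ)
      = ∑ α ∈ f.support, (C |MvPolynomial.coeff α f| : MvPolynomial (Fin n) ℝ) := by
    rw [coeffL1, map_sum]
  have key : C (coeffL1 f) - f
      = ∑ α ∈ f.support,
          (C |MvPolynomial.coeff α f| - monomial α (MvPolynomial.coeff α f)) := by
    rw [Finset.sum_sub_distrib, support_sum_monomial_coeff, ← hC]
  rw [key]
  refine Finset.sum_induction _ (· ∈ RP (pmX n) d)
    (fun a b ha hb => RP.add_mem ha hb) RP.zero_mem ?_
  intro α hα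
  set c := MvPolynomial.coeff α f with hc
  have hmono : (monomial α c : MvPolynomial (Fin n) ℝ) = C c * ∏ i, X i ^ α i := by
    rw [monomial_eq, Finsupp.prod_fintype]
    intro i
    exact pow_zero _
  have hk : (∑ i, α i : ℕ) ≤ d := by
    have h1 := MvPolynomial.le_totalDegree hα
    rw [hd] at h1
    have h2 : (α.sum fun _ e => e) = ∑ i, α i := Finsupp.sum_fintype _ _ (fun _ => rfl)
    omega
  rcases le_or_gt 0 c with h | h
  · have heq : (C |c| : MvPolynomial (Fin n) ℝ) - monomial α c
        = C c * (1 - ∏ i, X i ^ α i) := by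
      rw [hmono, abs_of_nonneg h]
      ring
    rw [heq]
    exact RP.cmul_mem h (RP.mono hk ((one_pm_pow_mem _ _ rfl).1))
  · have heq : (C |c| : MvPolynomial (Fin n) ℝ) - monomial α c
        = C (-c) * (1 + ∏ i, X i ^ α i) := by
      rw [hmono, abs_of_neg h, map_neg]
      ring
    rw [heq]
    exact RP.cmul_mem (neg_nonneg.mpr h.le) (RP.mono hk ((one_pm_pow_mem _ _ rfl).2))
end

section
/- Let f be a real polynomial in n variables with deg f = d. Then ‖f‖_{1,coef} − f belongs to the truncated quadratic module Q(1 ± x)_{2d+1}. -/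
open MvPolynomial

section Aux
variable {n : ℕ} {ι : Type} [Fintype ι]

lemma isSOS_zero : IsSOS (0 : MvPolynomial (Fin n) ℝ) := ⟨0, fun i => 0, by simp⟩

lemma isSOS_sq (p : MvPolynomial (Fin n) ℝ) : IsSOS (p ^ 2) := ⟨1, fun _ => p, by simp⟩

lemma isSOS_add {p q : MvPolynomial (Fin n) ℝ} (hp : IsSOS p) (hq : IsSOS q) :
    IsSOS (p + q) := by
  obtain ⟨k, a, rfl⟩ := hp
  obtain ⟨l, b, rfl⟩ := hq
  exact ⟨k + l, Fin.addCases a b, by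
    rw [Fin.sum_univ_add]
    simp⟩

lemma isSOS_smul {p : MvPolynomial (Fin n) ℝ} {c : ℝ} (hc : 0 ≤ c) (hp : IsSOS p) :
    IsSOS (C c * p) := by
  obtain ⟨k, a, rfl⟩ := hp
  refine ⟨k, fun i => C (Real.sqrt c) * a i, ?_⟩
  rw [Finset.mul_sum]
  refine Finset.sum_congr rfl fun i _ => ?_
  rw [mul_pow, ← C_pow, Real.sq_sqrt hc]

lemma qm_zero (g : ι → MvPolynomial (Fin n) ℝ) (r : ℕ) : (0 : MvPolynomial (Fin n) ℝ) ∈ QM g r :=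
  ⟨0, fun _ => 0, isSOS_zero, fun _ => isSOS_zero, by simp, by simp, by simp⟩

lemma qm_add {g : ι → MvPolynomial (Fin n) ℝ} {r : ℕ} {p q : MvPolynomial (Fin n) ℝ}
    (hp : p ∈ QM g r) (hq : q ∈ QM g r) : p + q ∈ QM g r := by
  obtain ⟨σ₀, σ, h1, h2, h3, h4, rfl⟩ := hp
  obtain ⟨τ₀, τ, h1', h2', h3', h4', rfl⟩ := hq
  refine ⟨σ₀ + τ₀, fun j => σ j + τ j, isSOS_add h1 h1', fun j => isSOS_add (h2 j) (h2' j),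
    le_trans (totalDegree_add _ _) (max_le h3 h3'), fun j => ?_, by
      rw [show (∑ j, (fun j => σ j + τ j) j * g j) = ∑ j, (σ j * g j + τ j * g j) from
        Finset.sum_congr rfl fun j _ => by ring, Finset.sum_add_distrib]
      ring⟩
  rw [add_mul]
  exact le_trans (totalDegree_add _ _) (max_le (h4 j) (h4' j))

lemma qm_mono {g : ι → MvPolynomial (Fin n) ℝ} {r r' : ℕ} (h : r ≤ r')
    {p : MvPolynomial (Fin n) ℝ} (hp : p ∈ QM g r) : p ∈ QM g r' := by
  obtain ⟨σ₀, σ, h1, h2, h3, h4, rfl⟩ := hp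
  exact ⟨σ₀, σ, h1, h2, h3.trans h, fun j => (h4 j).trans h, rfl⟩

lemma qm_smul {g : ι → MvPolynomial (Fin n) ℝ} {r : ℕ} {c : ℝ} (hc : 0 ≤ c)
    {p : MvPolynomial (Fin n) ℝ} (hp : p ∈ QM g r) : C c * p ∈ QM g r := by
  obtain ⟨σ₀, σ, h1, h2, h3, h4, rfl⟩ := hp
  refine ⟨C c * σ₀, fun j => C c * σ j, isSOS_smul hc h1, fun j => isSOS_smul hc (h2 j),
    ?_, fun j => ?_, by rw [mul_add, Finset.mul_sum]; exact congrArg _ (Finset.sum_congr rfl fun j _ => by ring)⟩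
  · exact le_trans (totalDegree_mul _ _) (by simpa using h3)
  · calc (C c * σ j * g j).totalDegree = (C c * (σ j * g j)).totalDegree := by ring_nf
      _ ≤ (C c).totalDegree + (σ j * g j).totalDegree := totalDegree_mul _ _
      _ ≤ r := by simpa using h4 j

lemma qm_sos {g : ι → MvPolynomial (Fin n) ℝ} {r : ℕ} {p : MvPolynomial (Fin n) ℝ}
    (hp : IsSOS p) (hd : p.totalDegree ≤ r) : p ∈ QM g r :=
  ⟨p, fun _ => 0, hp, fun _ => isSOS_zero, hd, fun _ => by simp, by simp⟩

lemma qm_single [DecidableEq ι] {g : ι → MvPolynomial (Fin n) ℝ} {r : ℕ} (j₀ : ι)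
    {σ : MvPolynomial (Fin n) ℝ} (hσ : IsSOS σ) (hd : (σ * g j₀).totalDegree ≤ r) :
    σ * g j₀ ∈ QM g r := by
  refine ⟨0, fun j => if j = j₀ then σ else 0, isSOS_zero, fun j => ?_, by simp, fun j => ?_, ?_⟩
  · by_cases h : j = j₀
    · simp only [h, if_pos rfl]; exact hσ
    · simp only [if_neg h]; exact isSOS_zero
  · by_cases h : j = j₀
    · subst h; simpa using hd
    · simp [if_neg h]
  · rw [zero_add]
    rw [show (∑ j, (if j = j₀ then σ else 0) * g j) = ∑ j, (if j = j₀ then σ * g j else 0) from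
      Finset.sum_congr rfl fun j _ => by split <;> simp]
    simp

lemma half_half : (C (1/2 : ℝ) : MvPolynomial (Fin n) ℝ) + C (1/2 : ℝ) = 1 := by
  rw [← C_add]; norm_num

lemma qm_step (i : Fin n) (v : MvPolynomial (Fin n) ℝ) (k : ℕ) (hv : v.totalDegree ≤ k)
    (h : (1 - v ^ 2) ∈ QM (pmX n) (2 * k + 1)) :
    (1 - (X i * v) ^ 2) ∈ QM (pmX n) (2 * (k + 1) + 1) := by
  have hC : (C (1/2 : ℝ) : MvPolynomial (Fin n) ℝ) + C (1/2 : ℝ) = 1 := half_half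
  have key : (1 : MvPolynomial (Fin n) ℝ) - (X i * v) ^ 2 =
      (C (1/2 : ℝ) * ((1 - X i) * v) ^ 2) * pmX n (i, true)
      + ((C (1/2 : ℝ) * ((1 + X i) * v) ^ 2) * pmX n (i, false) + (1 - v ^ 2)) := by
    have hpt : pmX n (i, true) = 1 + X i := by simp [pmX]
    have hpf : pmX n (i, false) = 1 - X i := by simp [pmX]
    rw [hpt, hpf]
    linear_combination (v ^ 2 * ((X i) ^ 2 - 1)) * hC
  rw [key]
  have hXdeg : (X i : MvPolynomial (Fin n) ℝ).totalDegree = 1 := totalDegree_X i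
  have d1 : ((1 : MvPolynomial (Fin n) ℝ) - X i).totalDegree ≤ 1 := by
    rw [sub_eq_add_neg]
    refine le_trans (totalDegree_add _ _) ?_
    simp [hXdeg, totalDegree_neg]
  have d2 : ((1 : MvPolynomial (Fin n) ℝ) + X i).totalDegree ≤ 1 := by
    refine le_trans (totalDegree_add _ _) ?_
    simp [hXdeg]
  have dpm : ∀ b, (pmX n (i, b)).totalDegree ≤ 1 := by
    intro b; cases b <;> simpa [pmX]
  have degbound : ∀ w : MvPolynomial (Fin n) ℝ, w.totalDegree ≤ 1 → ∀ b,
      ((C (1/2 : ℝ) * (w * v) ^ 2) * pmX n (i, b)).totalDegree ≤ 2 * (k + 1) + 1 := by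
    intro w hw b
    calc ((C (1/2 : ℝ) * (w * v) ^ 2) * pmX n (i, b)).totalDegree
        ≤ (C (1/2 : ℝ) * (w * v) ^ 2).totalDegree + (pmX n (i, b)).totalDegree :=
          totalDegree_mul _ _
      _ ≤ ((C (1/2 : ℝ)).totalDegree + ((w * v) ^ 2).totalDegree) + 1 :=
          add_le_add (totalDegree_mul _ _) (dpm b)
      _ ≤ (0 + 2 * (w * v).totalDegree) + 1 := by
          gcongr
          · exact le_of_eq (totalDegree_C _)
          · exact totalDegree_pow _ _
      _ ≤ (0 + 2 * (1 + k)) + 1 := by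
          gcongr
          exact le_trans (totalDegree_mul _ _) (add_le_add hw hv)
      _ ≤ 2 * (k + 1) + 1 := by omega
  refine qm_add (qm_single (i, true) (isSOS_smul (by norm_num) (isSOS_sq _)) (degbound _ d1 true))
    (qm_add (qm_single (i, false) (isSOS_smul (by norm_num) (isSOS_sq _)) (degbound _ d2 false))
      (qm_mono (by omega) h))

lemma qm_key : ∀ (k : ℕ) (α : Fin n →₀ ℕ), (α.sum fun _ e => e) = k →
    (1 - (monomial α (1:ℝ)) ^ 2) ∈ QM (pmX n) (2 * k + 1) := by
  intro k
  induction k with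
  | zero =>
    intro α hα
    have hz : ∀ j ∈ α.support, α j = 0 := by
      rw [Finsupp.sum] at hα
      exact Finset.sum_eq_zero_iff.mp hα
    have : α = 0 := by
      ext j
      by_cases hj : j ∈ α.support
      · simpa using hz j hj
      · simpa using Finsupp.notMem_support_iff.mp hj
    subst this
    simp only [monomial_zero', C_1, one_pow, sub_self]
    exact qm_zero _ _
  | succ k ih =>
    intro α hα
    have hne : α ≠ 0 := by
      rintro rfl; simp [Finsupp.sum] at hα
    obtain ⟨i, hi⟩ : ∃ i, α i ≠ 0 := by
      by_contra h
      push_neg at h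
      exact hne (Finsupp.ext fun i => h i)
    set β := α - Finsupp.single i 1 with hβ
    have hle : Finsupp.single i 1 ≤ α := by
      rw [Finsupp.single_le_iff]; omega
    have hadd : β + Finsupp.single i 1 = α := tsub_add_cancel_of_le hle
    have hβsum : (β.sum fun _ e => e) = k := by
      have := Finsupp.sum_add_index' (f := β) (g := Finsupp.single i 1)
        (h := fun (_ : Fin n) (e : ℕ) => e) (fun _ => rfl) (fun _ _ _ => rfl)
      rw [hadd] at this
      rw [hα] at this
      simp [Finsupp.sum_single_index] at this
      omega
    have hmon : monomial α (1:ℝ) = X i * monomial β 1 := by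
      rw [X, monomial_mul]
      rw [show Finsupp.single i 1 + β = α from by rw [add_comm]; exact hadd]
      norm_num
    rw [hmon]
    have hdegβ : (monomial β (1:ℝ)).totalDegree ≤ k := by
      rw [totalDegree_monomial _ (one_ne_zero)]
      exact le_of_eq hβsum
    exact qm_step i _ k hdegβ (ih β hβsum)

lemma qm_one_sub {d : ℕ} (α : Fin n →₀ ℕ) (hα : (α.sum fun _ e => e) ≤ d) :
    (1 - monomial α (1:ℝ)) ∈ QM (pmX n) (2 * d + 1) := by
  have hC : (C (1/2 : ℝ) : MvPolynomial (Fin n) ℝ) + C (1/2 : ℝ) = 1 := half_half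
  have key : (1 : MvPolynomial (Fin n) ℝ) - monomial α 1 =
      C (1/2 : ℝ) * (1 - monomial α 1) ^ 2 + C (1/2 : ℝ) * (1 - (monomial α 1) ^ 2) := by
    linear_combination ((monomial α (1:ℝ)) - 1) * hC
  rw [key]
  have hmdeg : (monomial α (1:ℝ)).totalDegree ≤ d := by
    rw [totalDegree_monomial _ one_ne_zero]; exact hα
  have hdeg : (C (1/2 : ℝ) * (1 - monomial α (1:ℝ)) ^ 2).totalDegree ≤ 2 * d + 1 := by
    calc (C (1/2 : ℝ) * (1 - monomial α (1:ℝ)) ^ 2).totalDegree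
        ≤ (C (1/2 : ℝ)).totalDegree + ((1 - monomial α (1:ℝ)) ^ 2).totalDegree :=
          totalDegree_mul _ _
      _ ≤ 0 + 2 * (1 - monomial α (1:ℝ)).totalDegree := by
          gcongr
          · exact le_of_eq (totalDegree_C _)
          · exact totalDegree_pow _ _
      _ ≤ 0 + 2 * d := by
          gcongr
          rw [sub_eq_add_neg]
          refine le_trans (totalDegree_add _ _) (max_le (by simp) ?_)
          rw [totalDegree_neg]; exact hmdeg
      _ ≤ 2 * d + 1 := by omega
  exact qm_add (qm_sos (isSOS_smul (by norm_num) (isSOS_sq _)) hdeg)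
    (qm_smul (by norm_num) (qm_mono (by omega) (qm_key _ α rfl |>.out)))

lemma qm_one_add {d : ℕ} (α : Fin n →₀ ℕ) (hα : (α.sum fun _ e => e) ≤ d) :
    (1 + monomial α (1:ℝ)) ∈ QM (pmX n) (2 * d + 1) := by
  have hC : (C (1/2 : ℝ) : MvPolynomial (Fin n) ℝ) + C (1/2 : ℝ) = 1 := half_half
  have key : (1 : MvPolynomial (Fin n) ℝ) + monomial α 1 =
      C (1/2 : ℝ) * (1 + monomial α 1) ^ 2 + C (1/2 : ℝ) * (1 - (monomial α 1) ^ 2) := by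
    linear_combination (-(monomial α (1:ℝ)) - 1) * hC
  rw [key]
  have hmdeg : (monomial α (1:ℝ)).totalDegree ≤ d := by
    rw [totalDegree_monomial _ one_ne_zero]; exact hα
  have hdeg : (C (1/2 : ℝ) * (1 + monomial α (1:ℝ)) ^ 2).totalDegree ≤ 2 * d + 1 := by
    calc (C (1/2 : ℝ) * (1 + monomial α (1:ℝ)) ^ 2).totalDegree
        ≤ (C (1/2 : ℝ)).totalDegree + ((1 + monomial α (1:ℝ)) ^ 2).totalDegree :=
          totalDegree_mul _ _
      _ ≤ 0 + 2 * (1 + monomial α (1:ℝ)).totalDegree := by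
          gcongr
          · exact le_of_eq (totalDegree_C _)
          · exact totalDegree_pow _ _
      _ ≤ 0 + 2 * d := by
          gcongr
          exact le_trans (totalDegree_add _ _) (max_le (by simp) hmdeg)
      _ ≤ 2 * d + 1 := by omega
  exact qm_add (qm_sos (isSOS_smul (by norm_num) (isSOS_sq _)) hdeg)
    (qm_smul (by norm_num) (qm_mono (by omega) (qm_key _ α rfl)))

end Aux

/-- `‖f‖_{1,coef} − f ∈ Q(1 ± x)_{2d+1}` where `d = deg f`. -/
theorem stmt4 {n : ℕ} (f : MvPolynomial (Fin n) ℝ) (d : ℕ) (hd : f.totalDegree = d) :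
    MvPolynomial.C (coeffL1 f) - f ∈ QM (pmX n) (2 * d + 1) := by
  have hrw : C (coeffL1 f) - f
      = ∑ α ∈ f.support, (C |coeff α f| - monomial α (coeff α f)) := by
    rw [Finset.sum_sub_distrib]
    congr 1
    · rw [coeffL1, map_sum]
    · exact as_sum f
  rw [hrw]
  refine Finset.sum_induction _ (· ∈ QM (pmX n) (2 * d + 1)) (fun a b => qm_add)
    (qm_zero _ _) fun α hα => ?_
  have hsum : (α.sum fun _ e => e) ≤ d := hd ▸ le_totalDegree hα
  rcases le_or_gt 0 (coeff α f) with hc | hc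
  · have : C |coeff α f| - monomial α (coeff α f)
        = C (coeff α f) * (1 - monomial α 1) := by
      rw [abs_of_nonneg hc, mul_sub, mul_one, C_mul_monomial, mul_one]
    rw [this]
    exact qm_smul hc (qm_one_sub α hsum)
  · have : C |coeff α f| - monomial α (coeff α f)
        = C (-coeff α f) * (1 + monomial α 1) := by
      rw [abs_of_neg hc, mul_add, mul_one, C_mul_monomial, mul_one, sub_eq_add_neg]
      simp [map_neg]
    rw [this]
    exact qm_smul (by linarith) (qm_one_add α hsum)
end

section
/- Let g₁,…,g_m be real polynomials in n variables of degrees at most d_g such that S_g := {x ∈ ℝⁿ : g_j(x) ≥ 0 for all j} is nonempty and contained in [−1,1]ⁿ. Then for all x ∈ [−1,1]ⁿ, G(x) ≤ 2·d_g²·(max_{j=1,…,m} ‖g_j‖_sup)·dist(x, S_g), where G(x) := max_{j=1,…,m} max{0, −g_j(x)}. -/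
open MvPolynomial

namespace Stmt9Aux

open Polynomial Finset Real

noncomputable section

/-! ### Derivative of a finite product -/

lemma derivative_finset_prod {ι : Type*} [DecidableEq ι] (s : Finset ι) (f : ι → Polynomial ℝ) :
    derivative (∏ i ∈ s, f i) = ∑ i ∈ s, (∏ j ∈ s.erase i, f j) * derivative (f i) := by
  induction s using Finset.induction_on with
  | empty => simp
  | @insert a s ha ih =>
      rw [Finset.prod_insert ha, derivative_mul, ih, Finset.sum_insert ha,
        Finset.erase_insert ha, Finset.mul_sum]
      rw [mul_comm (derivative (f a)) (∏ i ∈ s, f i)]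
      congr 1
      refine Finset.sum_congr rfl fun i hi => ?_
      have hia : i ≠ a := fun h => ha (h ▸ hi)
      have hset : (insert a s).erase i = insert a (s.erase i) := by
        ext x
        simp only [Finset.mem_erase, Finset.mem_insert]
        constructor
        · rintro ⟨hxi, hx | hx⟩
          · exact Or.inl hx
          · exact Or.inr ⟨hxi, hx⟩
        · rintro (hx | ⟨hxi, hx⟩)
          · exact ⟨hx ▸ hia.symm, Or.inl hx⟩
          · exact ⟨hxi, Or.inr hx⟩
      rw [hset, Finset.prod_insert (fun h => ha (Finset.mem_of_mem_erase h))]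
      ring

/-! ### Chebyshev nodes on [0,1] -/

/-- Chebyshev extrema mapped to `[0,1]`, in decreasing order. -/
def nu (d k : ℕ) : ℝ := (1 + Real.cos (k * Real.pi / d)) / 2

lemma nu_nonneg (d k : ℕ) : 0 ≤ nu d k := by
  have := Real.neg_one_le_cos (k * Real.pi / d)
  unfold nu; linarith

lemma nu_le_one (d k : ℕ) : nu d k ≤ 1 := by
  have := Real.cos_le_one (k * Real.pi / d)
  unfold nu; linarith

lemma nu_lt {d j k : ℕ} (hd : 0 < d) (hjk : j < k) (hkd : k ≤ d) : nu d k < nu d j := by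
  have hd' : (0:ℝ) < d := by exact_mod_cast hd
  have hθ : ∀ {m : ℕ}, m ≤ d → (m * Real.pi / d) ∈ Set.Icc 0 Real.pi := by
    intro m hm
    constructor
    · positivity
    · rw [div_le_iff₀ hd']
      have h1 : (m:ℝ) ≤ d := by exact_mod_cast hm
      nlinarith [Real.pi_pos]
  have hlt : (j:ℝ) * Real.pi / d < k * Real.pi / d := by
    have h1 : (j:ℝ) < k := by exact_mod_cast hjk
    have h2 := Real.pi_pos
    gcongr
  have := Real.strictAntiOn_cos (hθ (le_of_lt (lt_of_lt_of_le hjk hkd))) (hθ hkd) hlt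
  unfold nu; linarith

lemma nu_d (hd : 0 < d) : nu d d = 0 := by
  have hd' : (d:ℝ) ≠ 0 := by exact_mod_cast hd.ne'
  unfold nu
  rw [mul_comm, mul_div_assoc, div_self hd', mul_one, Real.cos_pi]
  ring

lemma nu_pos {d k : ℕ} (hd : 0 < d) (hk : k < d) : 0 < nu d k := by
  have := nu_lt hd hk (le_refl d)
  rw [nu_d hd] at this
  exact this

lemma nu_injOn (hd : 0 < d) : Set.InjOn (nu d) (Finset.range (d+1)) := by
  intro a ha b hb hab
  simp only [Finset.coe_range, Set.mem_Iio] at ha hb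
  by_contra hne
  rcases Nat.lt_or_ge a b with h | h
  · exact absurd hab (ne_of_gt (nu_lt hd h (by omega)))
  · have h' : b < a := by omega
    exact absurd hab (ne_of_lt (nu_lt hd h' (by omega)))

/-! ### Chebyshev polynomial values at -1 -/

lemma cos_nat_mul_pi (n : ℕ) : Real.cos (n * Real.pi) = (-1)^n := by
  simpa using Real.cos_nat_mul_pi_sub 0 n

lemma T_eval_neg_one (n : ℕ) : (Polynomial.Chebyshev.T ℝ (n:ℤ)).eval (-1 : ℝ) = (-1)^n := by
  have h := Polynomial.Chebyshev.T_real_cos Real.pi (n:ℤ)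
  rw [Real.cos_pi] at h
  rw [h]
  push_cast
  exact cos_nat_mul_pi n

lemma T_natDegree_le (n : ℕ) : (Polynomial.Chebyshev.T ℝ (n:ℤ)).natDegree ≤ n := by
  induction n using Nat.twoStepInduction with
  | zero => simp [Polynomial.Chebyshev.T_zero]
  | one => simpa [Polynomial.Chebyshev.T_one] using natDegree_X_le
  | more n ih1 ih2 =>
      have e2 : ((n+2:ℕ):ℤ) = (n:ℤ) + 2 := by push_cast; ring
      have e1 : ((n+1:ℕ):ℤ) = (n:ℤ) + 1 := by push_cast; ring
      rw [e2, Polynomial.Chebyshev.T_add_two, ← e1]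
      refine le_trans (natDegree_sub_le _ _) (max_le ?_ (by omega))
      refine le_trans (natDegree_mul_le) ?_
      have h1 : (2 * Polynomial.X : Polynomial ℝ).natDegree ≤ 1 :=
        le_trans natDegree_mul_le (by simp)
      omega

lemma T_deriv_neg_one (n : ℕ) :
    (derivative (Polynomial.Chebyshev.T ℝ (n:ℤ))).eval (-1:ℝ) = (-1)^(n+1) * n^2 := by
  induction n using Nat.twoStepInduction with
  | zero => simp [Polynomial.Chebyshev.T_zero]
  | one => simp [Polynomial.Chebyshev.T_one]
  | more n ih1 ih2 =>
      have e2 : ((n+2:ℕ):ℤ) = (n:ℤ) + 2 := by push_cast; ring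
      have e1 : ((n+1:ℕ):ℤ) = (n:ℤ) + 1 := by push_cast; ring
      rw [e2, Polynomial.Chebyshev.T_add_two]
      rw [derivative_sub, derivative_mul, derivative_mul, derivative_X]
      have hd2 : derivative (2 : Polynomial ℝ) = 0 := by
        simpa using derivative_C (a := (2:ℝ))
      rw [hd2]
      rw [← e1] at *
      simp only [Polynomial.eval_sub, Polynomial.eval_add, Polynomial.eval_mul, Polynomial.eval_X, Polynomial.eval_zero, zero_mul, mul_one, zero_add]
      rw [ih1, ih2, T_eval_neg_one (n+1)]
      have h2 : (2 : Polynomial ℝ).eval (-1) = 2 := by simp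
      rw [h2]
      have hp1 : ((-1:ℝ))^(n+1+1) = -((-1)^(n+1)) := by rw [pow_succ]; ring
      have hp3 : ((-1:ℝ))^(n+2+1) = (-1)^(n+1) := by
        rw [show n+2+1 = (n+1)+2 by ring, pow_add]; ring
      rw [hp1, hp3]
      push_cast
      ring

/-! ### The comparison polynomial W -/

/-- The affine map `2X - 1 : ℝ[X]`. -/
def lin : Polynomial ℝ := Polynomial.C 2 * Polynomial.X - Polynomial.C 1

lemma lin_natDegree_le : lin.natDegree ≤ 1 := by
  unfold lin
  refine le_trans (natDegree_sub_le _ _) (max_le (le_trans natDegree_mul_le (by simp)) (by simp))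

lemma lin_eval (t : ℝ) : lin.eval t = 2 * t - 1 := by simp [lin]

lemma lin_deriv : derivative lin = Polynomial.C 2 := by
  unfold lin
  simp

/-- Chebyshev polynomial rescaled to `[0,1]`. -/
def W (d : ℕ) : Polynomial ℝ := (Polynomial.Chebyshev.T ℝ (d:ℤ)).comp lin

lemma W_natDegree_le (d : ℕ) : (W d).natDegree ≤ d := by
  refine le_trans natDegree_comp_le ?_
  calc (Polynomial.Chebyshev.T ℝ (d:ℤ)).natDegree * lin.natDegree
      ≤ d * 1 := Nat.mul_le_mul (T_natDegree_le d) lin_natDegree_le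
    _ = d := by omega

lemma W_eval_nu (hd : 0 < d) (k : ℕ) : (W d).eval (nu d k) = (-1)^k := by
  have hd' : (d:ℝ) ≠ 0 := by exact_mod_cast hd.ne'
  unfold W
  rw [Polynomial.eval_comp]
  have h1 : lin.eval (nu d k) = Real.cos (k * Real.pi / d) := by
    rw [lin_eval]; unfold nu; ring
  rw [h1]
  have h2 := Polynomial.Chebyshev.T_real_cos (k * Real.pi / d) (d:ℤ)
  rw [h2]
  have h3 : ((d:ℤ):ℝ) * (k * Real.pi / d) = k * Real.pi := by
    push_cast
    field_simp
  rw [h3]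
  exact cos_nat_mul_pi k

lemma W_deriv_zero (hd : 0 < d) :
    (derivative (W d)).eval 0 = (-1)^(d+1) * (2 * (d:ℝ)^2) := by
  unfold W
  rw [derivative_comp, Polynomial.eval_mul, Polynomial.eval_comp]
  have h1 : lin.eval (0:ℝ) = -1 := by rw [lin_eval]; ring
  have h2 : (derivative lin).eval (0:ℝ) = 2 := by rw [lin_deriv]; simp
  rw [h1, h2, T_deriv_neg_one d]
  ring

/-! ### Lagrange basis derivative weights -/

/-- Derivative at `0` of the `k`-th Lagrange basis polynomial w.r.t. the Chebyshev nodes. -/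
def wgt (d k : ℕ) : ℝ :=
  (derivative (Lagrange.basis (Finset.range (d+1)) (nu d) k)).eval 0

lemma wgt_sign (hd : 0 < d) {k : ℕ} (hk : k ≤ d) : 0 ≤ (-1:ℝ)^(d+1+k) * wgt d k := by
  rcases eq_or_lt_of_le hk with rfl | hkd
  · -- k = d
    have hw : wgt k k ≤ 0 := by
      unfold wgt Lagrange.basis
      rw [derivative_finset_prod, Polynomial.eval_finset_sum]
      refine Finset.sum_nonpos fun i hi => ?_
      have hi' := Finset.mem_erase.mp hi
      have hik : i < k := by
        have := Finset.mem_range.mp hi'.2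
        omega
      rw [Polynomial.eval_mul, Polynomial.eval_prod]
      have h1 : ∀ j ∈ ((Finset.range (k+1)).erase k).erase i,
          (Lagrange.basisDivisor (nu k k) (nu k j)).eval 0 = 1 := by
        intro j hj
        have hj1 := Finset.mem_erase.mp hj
        have hj2 := Finset.mem_erase.mp hj1.2
        have hjk : j < k := by
          have := Finset.mem_range.mp hj2.2
          omega
        have hnu := nu_pos hd hjk
        rw [nu_d hd]
        unfold Lagrange.basisDivisor
        simp only [Polynomial.eval_mul, Polynomial.eval_C, Polynomial.eval_sub, Polynomial.eval_X, zero_sub, sub_zero]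
        exact inv_mul_cancel₀ (neg_ne_zero.mpr (ne_of_gt hnu))
      rw [Finset.prod_congr rfl h1, Finset.prod_const_one, one_mul]
      have hder : (derivative (Lagrange.basisDivisor (nu k k) (nu k i))).eval 0
          = (nu k k - nu k i)⁻¹ := by
        unfold Lagrange.basisDivisor
        simp [derivative_mul]
      rw [hder, nu_d hd, zero_sub]
      have hnui := nu_pos hd hik
      exact inv_nonpos.mpr (by linarith)
    have hpar : ((-1:ℝ))^(k+1+k) = -1 := by
      rw [show k+1+k = 2*k+1 by ring, pow_succ, pow_mul, neg_one_sq, one_pow, one_mul]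
    rw [hpar]
    linarith
  · -- k < d
    have hks : k ∈ Finset.range (d+1) := Finset.mem_range.mpr (by omega)
    have hd_in : d ∈ (Finset.range (d+1)).erase k :=
      Finset.mem_erase.mpr ⟨by omega, Finset.mem_range.mpr (by omega)⟩
    have hsplit : Lagrange.basis (Finset.range (d+1)) (nu d) k
        = (∏ j ∈ ((Finset.range (d+1)).erase k).erase d,
            Lagrange.basisDivisor (nu d k) (nu d j))
          * Lagrange.basisDivisor (nu d k) (nu d d) := by
      unfold Lagrange.basis
      exact (Finset.prod_erase_mul _ _ hd_in).symm
    have hBeval : (Lagrange.basisDivisor (nu d k) (nu d d)).eval 0 = 0 := by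
      rw [nu_d hd]
      unfold Lagrange.basisDivisor
      simp
    have hBder : (derivative (Lagrange.basisDivisor (nu d k) (nu d d))).eval 0
        = (nu d k)⁻¹ := by
      rw [nu_d hd]
      unfold Lagrange.basisDivisor
      simp [derivative_mul, derivative_sub]
    have hw : wgt d k = (∏ j ∈ ((Finset.range (d+1)).erase k).erase d,
        ((nu d k - nu d j)⁻¹ * (0 - nu d j))) * (nu d k)⁻¹ := by
      unfold wgt
      rw [hsplit, derivative_mul, Polynomial.eval_add, Polynomial.eval_mul, Polynomial.eval_mul, hBeval, mul_zero, zero_add,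
        hBder, Polynomial.eval_prod]
      congr 1
      refine Finset.prod_congr rfl fun j hj => ?_
      unfold Lagrange.basisDivisor
      simp
    obtain ⟨e, he⟩ : ∃ e, d = k + 1 + e := ⟨d - (k+1), by omega⟩
    set t := ((Finset.range (d+1)).erase k).erase d with ht
    set c : ℕ → ℝ := fun j => (nu d k - nu d j)⁻¹ * (0 - nu d j) with hc
    have hsplit2 : ∏ j ∈ t, c j
        = (∏ j ∈ t.filter (fun j => j < k), c j) *
          (∏ j ∈ t.filter (fun j => ¬ j < k), c j) :=
      (Finset.prod_filter_mul_prod_filter_not t _ _).symm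
    have hpos1 : 0 < ∏ j ∈ t.filter (fun j => j < k), c j := by
      refine Finset.prod_pos fun j hj => ?_
      have hjf := Finset.mem_filter.mp hj
      have hj1 := Finset.mem_erase.mp hjf.1
      have hj2 := Finset.mem_erase.mp hj1.2
      have hjd : j < d := by
        have := Finset.mem_range.mp hj2.2
        omega
      have h1 : nu d k < nu d j := nu_lt hd hjf.2 (by omega)
      have h2 : 0 < nu d j := nu_pos hd hjd
      rw [hc]
      have hinv : (nu d k - nu d j)⁻¹ < 0 := inv_lt_zero.mpr (by linarith)
      nlinarith
    have hneg : ∀ j ∈ t.filter (fun j => ¬ j < k), c j < 0 := by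
      intro j hj
      have hjf := Finset.mem_filter.mp hj
      have hj1 := Finset.mem_erase.mp hjf.1
      have hj2 := Finset.mem_erase.mp hj1.2
      have hjk : k < j := by
        rcases Nat.lt_or_ge j k with h | h
        · exact absurd h hjf.2
        · omega
      have hjd : j < d := by
        have := Finset.mem_range.mp hj2.2
        omega
      have h1 : nu d j < nu d k := nu_lt hd hjk (by omega)
      have h2 : 0 < nu d j := nu_pos hd hjd
      rw [hc]
      have hinv : 0 < (nu d k - nu d j)⁻¹ := inv_pos.mpr (by linarith)
      nlinarith
    have hcard : (t.filter (fun j => ¬ j < k)).card = e := by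
      have hset : t.filter (fun j => ¬ j < k) = Finset.Ioo k d := by
        ext j
        simp only [ht, Finset.mem_filter, Finset.mem_erase, Finset.mem_range, Finset.mem_Ioo]
        omega
      rw [hset, Nat.card_Ioo]
      omega
    have hprodneg : ∏ j ∈ t.filter (fun j => ¬ j < k), c j
        = (-1)^e * ∏ j ∈ t.filter (fun j => ¬ j < k), (-(c j)) := by
      have h1 : ∀ j ∈ t.filter (fun j => ¬ j < k), c j = (-1) * (-(c j)) := by
        intro j hj; ring
      rw [Finset.prod_congr rfl h1, Finset.prod_mul_distrib, Finset.prod_const, hcard]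
    have hposneg : 0 < ∏ j ∈ t.filter (fun j => ¬ j < k), (-(c j)) :=
      Finset.prod_pos fun j hj => by linarith [hneg j hj]
    have hnuk : 0 < (nu d k)⁻¹ := inv_pos.mpr (nu_pos hd hkd)
    have hpar : ((-1:ℝ))^(d+1+k) = (-1)^e := by
      rw [he, show k+1+e+1+k = 2*(k+1)+e by ring, pow_add, pow_mul, neg_one_sq, one_pow,
        one_mul]
    rw [hw, hsplit2, hprodneg, hpar]
    have hee : ((-1:ℝ))^e * (-1)^e = 1 := by
      rw [← pow_add, show e+e = 2*e by ring, pow_mul, neg_one_sq, one_pow]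
    have hre : (-1:ℝ)^e * ((∏ j ∈ t.filter (fun j => j < k), c j) *
          ((-1)^e * ∏ j ∈ t.filter (fun j => ¬ j < k), (-(c j))) * (nu d k)⁻¹)
        = ((-1:ℝ)^e * (-1)^e) * ((∏ j ∈ t.filter (fun j => j < k), c j) *
          (∏ j ∈ t.filter (fun j => ¬ j < k), (-(c j))) * (nu d k)⁻¹) := by ring
    rw [hre, hee, one_mul]
    positivity

lemma wgt_sum (hd : 0 < d) :
    ∑ k ∈ Finset.range (d+1), (-1:ℝ)^k * wgt d k = (-1)^(d+1) * (2 * (d:ℝ)^2) := by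
  have hdeg : (W d).degree < (Finset.range (d+1)).card := by
    rw [Finset.card_range]
    refine lt_of_le_of_lt (degree_le_natDegree) ?_
    exact_mod_cast Nat.lt_succ_of_le (W_natDegree_le d)
  have hint := Lagrange.eq_interpolate (nu_injOn hd) hdeg
  have hder : (derivative (W d)).eval 0
      = ∑ k ∈ Finset.range (d+1), (W d).eval (nu d k) * wgt d k := by
    conv_lhs => rw [hint]
    rw [Lagrange.interpolate_apply, derivative_sum, Polynomial.eval_finset_sum]
    refine Finset.sum_congr rfl fun k hk => ?_
    rw [derivative_C_mul, Polynomial.eval_mul, Polynomial.eval_C]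
    rfl
  have h2 : ∑ k ∈ Finset.range (d+1), (W d).eval (nu d k) * wgt d k
      = ∑ k ∈ Finset.range (d+1), (-1:ℝ)^k * wgt d k := by
    refine Finset.sum_congr rfl fun k hk => ?_
    rw [W_eval_nu hd k]
  rw [← h2, ← hder, W_deriv_zero hd]

theorem markov_endpoint {d : ℕ} (hd : 0 < d) (f : Polynomial ℝ) (hdeg : f.natDegree ≤ d)
    (M : ℝ) (hM : ∀ t : ℝ, t ∈ Set.Icc (0:ℝ) 1 → |f.eval t| ≤ M) :
    |(derivative f).eval 0| ≤ 2 * (d:ℝ)^2 * M := by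
  have hM0 : 0 ≤ M := le_trans (abs_nonneg _) (hM 0 ⟨le_refl 0, zero_le_one⟩)
  have hfd : f.degree < (Finset.range (d+1)).card := by
    rw [Finset.card_range]
    refine lt_of_le_of_lt (degree_le_natDegree) ?_
    exact_mod_cast Nat.lt_succ_of_le hdeg
  have hint := Lagrange.eq_interpolate (nu_injOn hd) hfd
  have hder : (derivative f).eval 0
      = ∑ k ∈ Finset.range (d+1), f.eval (nu d k) * wgt d k := by
    conv_lhs => rw [hint]
    rw [Lagrange.interpolate_apply, derivative_sum, Polynomial.eval_finset_sum]
    refine Finset.sum_congr rfl fun k hk => ?_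
    rw [derivative_C_mul, Polynomial.eval_mul, Polynomial.eval_C]
    rfl
  rw [hder]
  have step1 : |∑ k ∈ Finset.range (d+1), f.eval (nu d k) * wgt d k|
      ≤ ∑ k ∈ Finset.range (d+1), M * ((-1:ℝ)^(d+1+k) * wgt d k) := by
    refine le_trans (Finset.abs_sum_le_sum_abs _ _) (Finset.sum_le_sum fun k hk => ?_)
    have hk' : k ≤ d := by
      have := Finset.mem_range.mp hk
      omega
    have hsign := wgt_sign hd hk'
    have habs : |wgt d k| = (-1:ℝ)^(d+1+k) * wgt d k := by
      have h1 : |(-1:ℝ)^(d+1+k) * wgt d k| = |wgt d k| := by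
        rw [abs_mul, abs_pow, abs_neg, abs_one, one_pow, one_mul]
      rw [← h1, abs_of_nonneg hsign]
    rw [abs_mul, habs]
    exact mul_le_mul_of_nonneg_right (hM _ ⟨nu_nonneg d k, nu_le_one d k⟩) hsign
  refine le_trans step1 ?_
  have step2 : ∑ k ∈ Finset.range (d+1), M * ((-1:ℝ)^(d+1+k) * wgt d k)
      = M * ((-1:ℝ)^(d+1) * ∑ k ∈ Finset.range (d+1), (-1:ℝ)^k * wgt d k) := by
    rw [Finset.mul_sum, Finset.mul_sum]
    refine Finset.sum_congr rfl fun k hk => ?_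
    rw [pow_add]
    ring
  rw [step2, wgt_sum hd]
  have hee : ((-1:ℝ))^(d+1) * ((-1:ℝ)^(d+1) * (2 * (d:ℝ)^2)) = 2 * (d:ℝ)^2 := by
    rw [← mul_assoc, ← pow_add, show d+1+(d+1) = 2*(d+1) by ring, pow_mul, neg_one_sq, one_pow,
      one_mul]
  rw [hee]
  exact le_of_eq (by ring)

/-! ### Restriction of a multivariate polynomial to a line -/

/-- The univariate polynomial `t ↦ p (z + t • v)`. -/
def lineP {n : ℕ} (z v : Fin n → ℝ) (p : MvPolynomial (Fin n) ℝ) : Polynomial ℝ :=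
  MvPolynomial.aeval (fun i => Polynomial.C (z i) + Polynomial.C (v i) * Polynomial.X) p

lemma lineP_eval {n : ℕ} (z v : Fin n → ℝ) (p : MvPolynomial (Fin n) ℝ) (t : ℝ) :
    (lineP z v p).eval t = MvPolynomial.eval (fun i => z i + v i * t) p := by
  induction p using MvPolynomial.induction_on with
  | C a => simp [lineP]
  | add p q hp hq =>
      have hadd : lineP z v (p + q) = lineP z v p + lineP z v q := by
        unfold lineP; rw [map_add]
      rw [hadd, Polynomial.eval_add, hp, hq, map_add]
  | mul_X p i hp =>
      have hmul : lineP z v (p * MvPolynomial.X i)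
          = lineP z v p * (Polynomial.C (z i) + Polynomial.C (v i) * Polynomial.X) := by
        unfold lineP; rw [map_mul, MvPolynomial.aeval_X]
      rw [hmul, Polynomial.eval_mul, hp, MvPolynomial.eval_mul, MvPolynomial.eval_X]
      simp

lemma natDegree_linaff_le (a b : ℝ) :
    (Polynomial.C a + Polynomial.C b * Polynomial.X).natDegree ≤ 1 := by
  refine le_trans (natDegree_add_le _ _) (max_le (by simp) ?_)
  exact le_trans natDegree_mul_le (by simp)

lemma lineP_natDegree_le {n : ℕ} (z v : Fin n → ℝ) (p : MvPolynomial (Fin n) ℝ) :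
    (lineP z v p).natDegree ≤ p.totalDegree := by
  classical
  unfold lineP
  conv_lhs => rw [← MvPolynomial.support_sum_monomial_coeff p]
  rw [map_sum]
  refine Polynomial.natDegree_sum_le_of_forall_le _ _ fun α hα => ?_
  rw [MvPolynomial.aeval_monomial]
  refine le_trans natDegree_mul_le ?_
  have h0 : (algebraMap ℝ (Polynomial ℝ) (MvPolynomial.coeff α p)).natDegree = 0 := by
    rw [Polynomial.algebraMap_eq]
    exact natDegree_C _
  rw [h0, zero_add]
  have h1 : (α.prod fun i k =>
      (Polynomial.C (z i) + Polynomial.C (v i) * Polynomial.X)^k).natDegree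
      ≤ α.sum fun _ e => e := by
    rw [Finsupp.prod]
    refine le_trans (Polynomial.natDegree_prod_le _ _) ?_
    rw [Finsupp.sum]
    refine Finset.sum_le_sum fun i hi => ?_
    refine le_trans (natDegree_pow_le) ?_
    calc α i * (Polynomial.C (z i) + Polynomial.C (v i) * Polynomial.X).natDegree
        ≤ α i * 1 := Nat.mul_le_mul_left _ (natDegree_linaff_le _ _)
      _ = α i := by omega
  exact le_trans h1 (MvPolynomial.le_totalDegree hα)

lemma lineP_deriv {n : ℕ} (z v : Fin n → ℝ) (p : MvPolynomial (Fin n) ℝ) (t : ℝ) :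
    (derivative (lineP z v p)).eval t
      = ∑ i, v i * MvPolynomial.eval (fun i => z i + v i * t) (MvPolynomial.pderiv i p) := by
  induction p using MvPolynomial.induction_on with
  | C a => simp [lineP]
  | add p q hp hq =>
      have hadd : lineP z v (p + q) = lineP z v p + lineP z v q := by
        unfold lineP; rw [map_add]
      rw [hadd, derivative_add, Polynomial.eval_add, hp, hq, ← Finset.sum_add_distrib]
      refine Finset.sum_congr rfl fun i _ => ?_
      rw [map_add, map_add]
      ring
  | mul_X p j hp =>
      have hmul : lineP z v (p * MvPolynomial.X j)
          = lineP z v p * (Polynomial.C (z j) + Polynomial.C (v j) * Polynomial.X) := by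
        unfold lineP; rw [map_mul, MvPolynomial.aeval_X]
      rw [hmul, derivative_mul, Polynomial.eval_add, Polynomial.eval_mul, Polynomial.eval_mul]
      rw [hp, lineP_eval]
      have hder : (derivative (Polynomial.C (z j) + Polynomial.C (v j) * Polynomial.X)).eval t
          = v j := by
        simp
      rw [hder]
      have heval : (Polynomial.C (z j) + Polynomial.C (v j) * Polynomial.X).eval t
          = z j + v j * t := by simp
      rw [heval]
      have hR : ∀ i : Fin n, MvPolynomial.pderiv i (p * MvPolynomial.X j)
          = MvPolynomial.pderiv i p * MvPolynomial.X j
            + p * (if j = i then 1 else 0) := by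
        intro i
        rw [MvPolynomial.pderiv_mul, MvPolynomial.pderiv_X]
        congr 1
        rw [Pi.single_apply]
      have hsum : ∑ i, v i * MvPolynomial.eval (fun i => z i + v i * t)
            (MvPolynomial.pderiv i (p * MvPolynomial.X j))
          = ∑ i, (v i * MvPolynomial.eval (fun i => z i + v i * t) (MvPolynomial.pderiv i p)
              * (z j + v j * t)
            + v i * MvPolynomial.eval (fun i => z i + v i * t) p * (if j = i then 1 else 0)) := by
        refine Finset.sum_congr rfl fun i _ => ?_
        rw [hR i]
        rw [map_add, MvPolynomial.eval_mul, MvPolynomial.eval_mul, MvPolynomial.eval_X]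
        have : MvPolynomial.eval (fun i => z i + v i * t)
            ((if j = i then 1 else 0) : MvPolynomial (Fin n) ℝ) = (if j = i then 1 else 0) := by
          split <;> simp
        rw [this]
        ring
      rw [hsum, Finset.sum_add_distrib]
      have hdelta : ∑ i, v i * MvPolynomial.eval (fun i => z i + v i * t) p
            * (if j = i then 1 else 0)
          = v j * MvPolynomial.eval (fun i => z i + v i * t) p := by
        rw [Finset.sum_eq_single j]
        · simp
        · intro b _ hbj
          simp [Ne.symm hbj]
        · intro h
          exact absurd (Finset.mem_univ j) h
      rw [hdelta, ← Finset.sum_mul]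
      ring

/-! ### Pointwise directional derivative bounds on the box -/

lemma box_convex_mem {n : ℕ} {x y : Fin n → ℝ} (hx : x ∈ Box n) (hy : y ∈ Box n) {t : ℝ}
    (ht : t ∈ Set.Icc (0:ℝ) 1) : (fun i => x i + (y i - x i) * t) ∈ Box n := by
  intro i
  show |x i + (y i - x i) * t| ≤ 1
  have h1 : x i + (y i - x i) * t = (1 - t) * x i + t * y i := by ring
  rw [h1]
  have hx1 := hx i
  have hy1 := hy i
  have ht0 := ht.1
  have ht1 := ht.2
  calc |(1-t) * x i + t * y i| ≤ |(1-t) * x i| + |t * y i| := abs_add_le _ _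
    _ ≤ (1-t) * 1 + t * 1 := by
        rw [abs_mul, abs_mul, abs_of_nonneg (by linarith : (0:ℝ) ≤ 1 - t),
          abs_of_nonneg ht0]
        nlinarith [hx1, hy1, ht0, ht1, abs_nonneg (x i), abs_nonneg (y i)]
    _ = 1 := by ring

lemma pointwise_dir_bound {n d : ℕ} (hd : 0 < d) (p : MvPolynomial (Fin n) ℝ)
    (hdeg : p.totalDegree ≤ d) (M : ℝ) (hM : ∀ z ∈ Box n, |MvPolynomial.eval z p| ≤ M)
    {z w : Fin n → ℝ} (hz : z ∈ Box n) (hw : w ∈ Box n) :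
    |∑ i, (w i - z i) * MvPolynomial.eval z (MvPolynomial.pderiv i p)| ≤ 2 * (d:ℝ)^2 * M := by
  have hbound : ∀ t : ℝ, t ∈ Set.Icc (0:ℝ) 1
      → |(lineP z (fun i => w i - z i) p).eval t| ≤ M := by
    intro t ht
    rw [lineP_eval]
    exact hM _ (box_convex_mem hz hw ht)
  have key := markov_endpoint hd (lineP z (fun i => w i - z i) p)
    (le_trans (lineP_natDegree_le _ _ _) hdeg) M hbound
  have h0 := lineP_deriv z (fun i => w i - z i) p 0
  have hz0 : (fun i => z i + (w i - z i) * 0) = z := by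
    funext i; ring
  rw [hz0] at h0
  rw [← h0]
  exact key

lemma pointwise_unit_bound {n d : ℕ} (hd : 0 < d) (p : MvPolynomial (Fin n) ℝ)
    (hdeg : p.totalDegree ≤ d) (M : ℝ) (hM : ∀ z ∈ Box n, |MvPolynomial.eval z p| ≤ M)
    {z u : Fin n → ℝ} (hz : z ∈ Box n) (hu : ∑ i, (u i)^2 = 1) :
    |∑ i, u i * MvPolynomial.eval z (MvPolynomial.pderiv i p)| ≤ 2 * (d:ℝ)^2 * M := by
  have hu1 : ∀ i, |u i| ≤ 1 := by
    intro i
    have h1 : (u i)^2 ≤ 1 := by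
      rw [← hu]
      exact Finset.single_le_sum (f := fun i => (u i)^2) (fun i _ => sq_nonneg _)
        (Finset.mem_univ i)
    nlinarith [abs_nonneg (u i), sq_abs (u i)]
  have huB : u ∈ Box n := hu1
  have hnuB : (fun i => -(u i)) ∈ Box n := by
    intro i
    rw [abs_neg]
    exact hu1 i
  have h1 := pointwise_dir_bound hd p hdeg M hM hz huB
  have h2 := pointwise_dir_bound hd p hdeg M hM hz hnuB
  have hdec : ∑ i, u i * MvPolynomial.eval z (MvPolynomial.pderiv i p)
      = (1/2) * (∑ i, (u i - z i) * MvPolynomial.eval z (MvPolynomial.pderiv i p))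
        - (1/2) * (∑ i, ((fun i => -(u i)) i - z i)
            * MvPolynomial.eval z (MvPolynomial.pderiv i p)) := by
    rw [Finset.mul_sum, Finset.mul_sum, ← Finset.sum_sub_distrib]
    refine Finset.sum_congr rfl fun i _ => by ring
  rw [hdec]
  calc |(1/2) * (∑ i, (u i - z i) * MvPolynomial.eval z (MvPolynomial.pderiv i p))
        - (1/2) * (∑ i, ((fun i => -(u i)) i - z i)
            * MvPolynomial.eval z (MvPolynomial.pderiv i p))|
      ≤ |(1/2) * (∑ i, (u i - z i) * MvPolynomial.eval z (MvPolynomial.pderiv i p))|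
        + |(1/2) * (∑ i, ((fun i => -(u i)) i - z i)
            * MvPolynomial.eval z (MvPolynomial.pderiv i p))| := abs_sub _ _
    _ ≤ (1/2) * (2 * (d:ℝ)^2 * M) + (1/2) * (2 * (d:ℝ)^2 * M) := by
        rw [abs_mul, abs_mul]
        have h12 : |(1:ℝ)/2| = 1/2 := by norm_num
        rw [h12]
        gcongr
    _ = 2 * (d:ℝ)^2 * M := by ring

/-! ### The Lipschitz bound on the box -/

lemma lipschitz_box {n d : ℕ} (p : MvPolynomial (Fin n) ℝ) (hdeg : p.totalDegree ≤ d)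
    (M : ℝ) (hM : ∀ z ∈ Box n, |MvPolynomial.eval z p| ≤ M)
    {x y : Fin n → ℝ} (hx : x ∈ Box n) (hy : y ∈ Box n) :
    |MvPolynomial.eval x p - MvPolynomial.eval y p|
      ≤ 2 * (d:ℝ)^2 * M * Real.sqrt (∑ i, (x i - y i)^2) := by
  have hM0 : 0 ≤ M := le_trans (abs_nonneg _) (hM x hx)
  rcases Nat.eq_zero_or_pos d with rfl | hd
  · -- degree zero: p is constant along any segment
    have hq : (lineP x (fun i => y i - x i) p).natDegree = 0 :=
      Nat.le_zero.mp (le_trans (lineP_natDegree_le _ _ _) hdeg)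
    have hconst := Polynomial.eq_C_of_natDegree_le_zero (le_of_eq hq)
    have hfun1 : (fun i => x i + (y i - x i) * 1) = y := by funext i; ring
    have hfun0 : (fun i => x i + (y i - x i) * 0) = x := by funext i; ring
    have he1 : MvPolynomial.eval y p = (lineP x (fun i => y i - x i) p).eval 1 := by
      rw [lineP_eval, hfun1]
    have he0 : MvPolynomial.eval x p = (lineP x (fun i => y i - x i) p).eval 0 := by
      rw [lineP_eval, hfun0]
    rw [he1, he0, hconst]
    simp
  · set r := Real.sqrt (∑ i, (x i - y i)^2) with hr
    have hr0 : 0 ≤ r := Real.sqrt_nonneg _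
    rcases eq_or_ne x y with rfl | hxy
    · have h0 : |MvPolynomial.eval x p - MvPolynomial.eval x p| = 0 := by simp
      rw [h0]
      have h1 : (0:ℝ) ≤ 2 * (d:ℝ)^2 * M := by positivity
      exact mul_nonneg h1 hr0
    · have hSpos : 0 < ∑ i, (x i - y i)^2 := by
        rcases (Finset.sum_nonneg (fun i (_ : i ∈ Finset.univ) => sq_nonneg (x i - y i))).lt_or_eq
          with h | h
        · exact h
        · exfalso
          apply hxy
          funext i
          have := (Finset.sum_eq_zero_iff_of_nonneg
            (fun i (_ : i ∈ Finset.univ) => sq_nonneg (x i - y i))).mp h.symm i (Finset.mem_univ i)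
          have h2 : x i - y i = 0 := by
            nlinarith [sq_nonneg (x i - y i)]
          linarith
      have hrpos : 0 < r := Real.sqrt_pos.mpr hSpos
      have hr2 : r^2 = ∑ i, (x i - y i)^2 := Real.sq_sqrt (le_of_lt hSpos)
      set u : Fin n → ℝ := fun i => (y i - x i) / r with huu
      have hu : ∑ i, (u i)^2 = 1 := by
        have : ∀ i, (u i)^2 = (x i - y i)^2 / r^2 := by
          intro i
          rw [huu]
          rw [div_pow]
          congr 1
          ring
        rw [Finset.sum_congr rfl (fun i _ => this i), ← Finset.sum_div, ← hr2]
        field_simp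
      set q := lineP x (fun i => y i - x i) p with hqdef
      have hq : ∀ t ∈ Set.Icc (0:ℝ) 1, |(derivative q).eval t| ≤ 2 * (d:ℝ)^2 * M * r := by
        intro t ht
        rw [hqdef, lineP_deriv]
        have hzt : (fun i => x i + (y i - x i) * t) ∈ Box n := box_convex_mem hx hy ht
        have hkey := pointwise_unit_bound hd p hdeg M hM hzt hu
        have hfac : ∑ i, (y i - x i) * MvPolynomial.eval (fun i => x i + (y i - x i) * t)
              (MvPolynomial.pderiv i p)
            = r * ∑ i, u i * MvPolynomial.eval (fun i => x i + (y i - x i) * t)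
              (MvPolynomial.pderiv i p) := by
          rw [Finset.mul_sum]
          refine Finset.sum_congr rfl fun i _ => ?_
          rw [huu]
          field_simp
          simp only [mul_comm t]
        rw [hfac, abs_mul, abs_of_pos hrpos]
        calc r * |∑ i, u i * MvPolynomial.eval (fun i => x i + (y i - x i) * t)
              (MvPolynomial.pderiv i p)|
            ≤ r * (2 * (d:ℝ)^2 * M) := mul_le_mul_of_nonneg_left hkey hr0
          _ = 2 * (d:ℝ)^2 * M * r := by ring
      have hderiv : ∀ t ∈ Set.Icc (0:ℝ) 1, HasDerivWithinAt (fun t => q.eval t)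
          ((derivative q).eval t) (Set.Icc (0:ℝ) 1) t :=
        fun t _ => (q.hasDerivAt t).hasDerivWithinAt
      have hmvt := norm_image_sub_le_of_norm_deriv_le_segment_01' hderiv
        (fun t ht => by
          rw [Real.norm_eq_abs]
          exact hq t (Set.mem_Icc_of_Ico ht))
      have hfun1 : (fun i => x i + (y i - x i) * 1) = y := by funext i; ring
      have hfun0 : (fun i => x i + (y i - x i) * 0) = x := by funext i; ring
      have he1 : q.eval 1 = MvPolynomial.eval y p := by
        rw [hqdef, lineP_eval, hfun1]
      have he0 : q.eval 0 = MvPolynomial.eval x p := by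
        rw [hqdef, lineP_eval, hfun0]
      rw [he1, he0, Real.norm_eq_abs] at hmvt
      calc |MvPolynomial.eval x p - MvPolynomial.eval y p|
          = |MvPolynomial.eval y p - MvPolynomial.eval x p| := abs_sub_comm _ _
        _ ≤ 2 * (d:ℝ)^2 * M * r := hmvt

/-! ### Sup-norm facts -/

lemma box_isCompact (n : ℕ) : IsCompact (Box n) := by
  have h : Box n = Set.pi Set.univ (fun _ : Fin n => Set.Icc (-1:ℝ) 1) := by
    ext x
    constructor
    · intro hb i _
      exact Set.mem_Icc.mpr (abs_le.mp (hb i))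
    · intro hb i
      exact abs_le.mpr (Set.mem_Icc.mp (hb i (Set.mem_univ i)))
  rw [h]
  exact isCompact_univ_pi (fun _ => isCompact_Icc)

lemma zero_mem_box (n : ℕ) : (fun _ => (0:ℝ) : Fin n → ℝ) ∈ Box n := by
  intro i
  show |(0:ℝ)| ≤ 1
  simp

lemma bddAbove_abseval (n : ℕ) (f : MvPolynomial (Fin n) ℝ) :
    BddAbove ((fun x => |MvPolynomial.eval x f|) '' Box n) :=
  ((box_isCompact n).image ((MvPolynomial.continuous_eval f).abs)).bddAbove

lemma abs_eval_le_supNorm {n : ℕ} (f : MvPolynomial (Fin n) ℝ) {x : Fin n → ℝ}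
    (hx : x ∈ Box n) : |MvPolynomial.eval x f| ≤ supNorm f :=
  le_csSup (bddAbove_abseval n f) ⟨x, hx, rfl⟩

lemma supNorm_nonneg {n : ℕ} (f : MvPolynomial (Fin n) ℝ) : 0 ≤ supNorm f :=
  le_trans (abs_nonneg _) (abs_eval_le_supNorm f (zero_mem_box n))

end

end Stmt9Aux

/-- `G(x) ≤ 2·d_g²·(max_j ‖g_j‖_sup)·dist(x, S_g)` on `[-1,1]^n`. -/
theorem stmt9 {n m : ℕ} (g : Fin m → MvPolynomial (Fin n) ℝ) (dg : ℕ)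
    (hdg : ∀ j, (g j).totalDegree ≤ dg)
    (hne : (Sg g).Nonempty) (hsub : Sg g ⊆ Box n) :
    ∀ x ∈ Box n,
      Gfun g x ≤ 2 * (dg : ℝ) ^ 2 * (⨆ j, supNorm (g j)) * euclDist x (Sg g) := by
  intro x hx
  by_cases hm : m = 0
  · subst hm
    have h1 : Gfun g x = 0 := Real.iSup_of_isEmpty _
    have h2 : (⨆ j, supNorm (g j)) = 0 := Real.iSup_of_isEmpty _
    rw [h1, h2]
    simp
  · haveI : Nonempty (Fin m) := ⟨⟨0, Nat.pos_of_ne_zero hm⟩⟩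
    set M := ⨆ j, supNorm (g j) with hM
    set D := euclDist x (Sg g) with hD
    set K := 2 * (dg:ℝ)^2 * M with hK
    have hMj : ∀ j, supNorm (g j) ≤ M := by
      intro j
      rw [hM]
      exact le_ciSup ((Set.finite_range (fun j => supNorm (g j))).bddAbove) j
    have hM0 : 0 ≤ M :=
      le_trans (Stmt9Aux.supNorm_nonneg _) (hMj (Classical.arbitrary (Fin m)))
    have hD0 : 0 ≤ D := by
      rw [hD]
      refine Real.sInf_nonneg ?_
      rintro r ⟨y, _, rfl⟩
      exact Real.sqrt_nonneg _
    have hK0 : 0 ≤ K := by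
      rw [hK]
      positivity
    have key : ∀ (j : Fin m) (y : Fin n → ℝ), y ∈ Sg g →
        -(MvPolynomial.eval x (g j)) ≤ K * Real.sqrt (∑ i, (x i - y i)^2) := by
      intro j y hy
      have hyB : y ∈ Box n := hsub hy
      have hlip := Stmt9Aux.lipschitz_box (g j) (hdg j) (supNorm (g j))
        (fun z hz => Stmt9Aux.abs_eval_le_supNorm (g j) hz) hx hyB
      have hy0 : 0 ≤ MvPolynomial.eval y (g j) := hy j
      have h1 : -(MvPolynomial.eval x (g j))
          ≤ |MvPolynomial.eval x (g j) - MvPolynomial.eval y (g j)| := by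
        have h2 : -(MvPolynomial.eval x (g j))
            ≤ MvPolynomial.eval y (g j) - MvPolynomial.eval x (g j) := by linarith
        exact le_trans h2 (le_trans (le_abs_self _) (by rw [abs_sub_comm]))
      refine le_trans h1 (le_trans hlip ?_)
      rw [hK]
      have hs0 : 0 ≤ Real.sqrt (∑ i, (x i - y i)^2) := Real.sqrt_nonneg _
      exact mul_le_mul_of_nonneg_right
        (mul_le_mul_of_nonneg_left (hMj j) (by positivity)) hs0
    have keyj : ∀ j : Fin m, max 0 (-(MvPolynomial.eval x (g j))) ≤ K * D := by
      intro j
      refine max_le (mul_nonneg hK0 hD0) ?_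
      rcases eq_or_lt_of_le hK0 with hK0' | hKpos
      · obtain ⟨y, hy⟩ := hne
        have h := key j y hy
        rw [← hK0', zero_mul] at h
        rw [← hK0', zero_mul]
        exact h
      · have hlb : -(MvPolynomial.eval x (g j)) / K ≤ D := by
          rw [hD]
          show _ ≤ sInf _
          refine le_csInf (hne.image _) ?_
          rintro r ⟨y, hy, rfl⟩
          rw [div_le_iff₀ hKpos]
          calc -(MvPolynomial.eval x (g j)) ≤ K * Real.sqrt (∑ i, (x i - y i)^2) :=
                key j y hy
            _ = Real.sqrt (∑ i, (x i - y i)^2) * K := mul_comm _ _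
        calc -(MvPolynomial.eval x (g j))
            = (-(MvPolynomial.eval x (g j)) / K) * K := by field_simp
          _ ≤ D * K := mul_le_mul_of_nonneg_right hlb (le_of_lt hKpos)
          _ = K * D := mul_comm _ _
    exact ciSup_le keyj
end

section
/- Let f be a real polynomial in n variables with deg f = d, and let g₁,…,g_m be real polynomials such that S_g := {x ∈ ℝⁿ : g_j(x) ≥ 0 for all j} is nonempty and contained in [−1,1]ⁿ. Suppose L ≥ 1 and c > 0 satisfy the Łojasiewicz inequality dist(x, S_g)^L ≤ c·G(x) for all x ∈ [−1,1]ⁿ. If f_min := min_{x ∈ S_g} f(x) > 0, then for all x ∈ [−1,1]ⁿ, max{0, f_min − f(x)} ≤ (1/2)·c²·(4d²·κ)^{2L}·f_min·H(x) + (1/2)·f_min, where κ := ‖f‖_sup / f_min. -/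
open MvPolynomial

section AuxMarkov
open Polynomial Finset Real
lemma derivative_finset_prod' {ι : Type*} [DecidableEq ι] (s : Finset ι) (f : ι → ℝ[X]) :
    derivative (∏ i ∈ s, f i) = ∑ i ∈ s, (∏ j ∈ s.erase i, f j) * derivative (f i) := by
  induction s using Finset.induction_on with
  | empty => simp
  | insert _ _ hx ih =>
    rename_i a s
    rw [Finset.prod_insert hx, derivative_mul, ih, Finset.sum_insert hx,
      Finset.erase_insert hx, Finset.mul_sum]
    congr 1
    · rw [mul_comm]
    · apply Finset.sum_congr rfl
      intro j hj
      have haj : a ≠ j := by rintro rfl; exact hx hj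
      rw [Finset.erase_insert_of_ne haj, Finset.prod_insert (by simp [hx]), mul_assoc]

lemma cheb_natDegree_le (d : ℕ) : (Chebyshev.T ℝ (d : ℤ)).natDegree ≤ d := by
  induction d using Nat.strong_induction_on with
  | _ d ih =>
    match d with
    | 0 => simp [Chebyshev.T_zero]
    | 1 => simp [Chebyshev.T_one]
    | (k+2) =>
      have h : (Chebyshev.T ℝ ((k:ℤ)+2)) = 2 * Polynomial.X * Chebyshev.T ℝ (k+1) - Chebyshev.T ℝ k :=
        Chebyshev.T_add_two ℝ k
      have h1 := ih (k+1) (by omega)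
      have h0 := ih k (by omega)
      push_cast
      rw [h]
      refine le_trans (natDegree_sub_le _ _) ?_
      simp only [max_le_iff]
      constructor
      · refine le_trans (natDegree_mul_le) ?_
        have : (2 * Polynomial.X : ℝ[X]).natDegree ≤ 1 := by
          refine le_trans (natDegree_mul_le) ?_
          simp
        push_cast at h1
        omega
      · omega

lemma chebU_eval_one (d : ℕ) : (Chebyshev.U ℝ (d : ℤ)).eval 1 = d + 1 := by
  induction d using Nat.strong_induction_on with
  | _ d ih =>
    match d with
    | 0 => simp [Chebyshev.U_zero]
    | 1 => norm_num [Chebyshev.U_one]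
    | (k+2) =>
      have h : (Chebyshev.U ℝ ((k:ℤ)+2)) = 2 * Polynomial.X * Chebyshev.U ℝ (k+1) - Chebyshev.U ℝ k :=
        Chebyshev.U_add_two ℝ k
      have h1 := ih (k+1) (by omega)
      have h0 := ih k (by omega)
      push_cast
      push_cast at h1 h0
      rw [h]
      simp [h1, h0]
      ring

lemma chebT_deriv_one (d : ℕ) : (derivative (Chebyshev.T ℝ (d : ℤ))).eval 1 = (d:ℝ)^2 := by
  rw [Chebyshev.T_derivative_eq_U]
  match d with
  | 0 => simp
  | (k+1) =>
    have : ((k:ℤ)+1) - 1 = (k:ℤ) := by ring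
    push_cast
    rw [this]
    simp only [Polynomial.eval_mul]
    rw [chebU_eval_one k]
    push_cast
    simp
    ring

theorem markov_endpoint {d : ℕ} (hd : 1 ≤ d) {p : ℝ[X]} (hdeg : p.natDegree ≤ d)
    (hb : ∀ x ∈ Set.Icc (-1:ℝ) 1, |p.eval x| ≤ 1) :
    |(derivative p).eval 1| ≤ (d:ℝ)^2 := by
  have hdR : (0:ℝ) < d := by exact_mod_cast hd
  set N := d + 1 with hN
  set v : Fin N → ℝ := fun k => Real.cos ((k : ℕ) * π / d) with hv
  have hθmem : ∀ k : Fin N, ((k:ℕ):ℝ) * π / d ∈ Set.Icc 0 π := by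
    intro k
    constructor
    · positivity
    · rw [div_le_iff₀ hdR]
      have hk : ((k:ℕ):ℝ) ≤ d := by
        have := k.isLt
        exact_mod_cast Nat.lt_succ_iff.mp this
      nlinarith [pi_pos]
  have hanti : StrictAnti v := by
    intro k l hkl
    refine Real.strictAntiOn_cos (hθmem k) (hθmem l) ?_
    have hkl' : ((k:ℕ):ℝ) < ((l:ℕ):ℝ) := by exact_mod_cast hkl
    gcongr

  have hinj : Set.InjOn v ↑(univ : Finset (Fin N)) := hanti.injective.injOn
  have hv0 : v 0 = 1 := by simp [hv]
  have hvlt1 : ∀ k : Fin N, k ≠ 0 → v k < 1 := by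
    intro k hk
    rw [← hv0]
    exact hanti (Fin.pos_of_ne_zero hk)
  have hvmem : ∀ k : Fin N, v k ∈ Set.Icc (-1:ℝ) 1 :=
    fun k => ⟨Real.neg_one_le_cos _, Real.cos_le_one _⟩
  set c : Fin N → ℝ := fun k => (derivative (Lagrange.basis univ v k)).eval 1 with hc
  -- interpolation identity
  have interp : ∀ w : ℝ[X], w.natDegree ≤ d →
      (derivative w).eval 1 = ∑ k, w.eval (v k) * c k := by
    intro w hw
    have hdeg' : w.degree < (#(univ : Finset (Fin N)) : WithBot ℕ) := by
      refine lt_of_le_of_lt (degree_le_natDegree) ?_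
      rw [Finset.card_univ, Fintype.card_fin]
      exact_mod_cast Nat.lt_succ_iff.mpr hw
    have hwi := Lagrange.eq_interpolate hinj hdeg'
    conv_lhs => rw [hwi]
    rw [Lagrange.interpolate_apply, derivative_sum, eval_finset_sum]
    refine Finset.sum_congr rfl fun k _ => ?_
    rw [derivative_mul, derivative_C, zero_mul, Polynomial.eval_add, Polynomial.eval_zero]
    simp [hc]

  have dbd : ∀ x y : ℝ, derivative (Lagrange.basisDivisor x y) = Polynomial.C (x - y)⁻¹ := by
    intro x y; simp [Lagrange.basisDivisor]
  have ebd : ∀ x y : ℝ, (Lagrange.basisDivisor x y).eval 1 = (x - y)⁻¹ * (1 - y) := by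
    intro x y; simp [Lagrange.basisDivisor]
  have cformula : ∀ k : Fin N, c k = ∑ j ∈ univ.erase k,
      (∏ l ∈ (univ.erase k).erase j, (v k - v l)⁻¹ * (1 - v l)) * (v k - v j)⁻¹ := by
    intro k
    have hck : c k = (derivative (Lagrange.basis univ v k)).eval 1 := rfl
    rw [hck, Lagrange.basis, derivative_finset_prod', eval_finset_sum]
    refine Finset.sum_congr rfl fun j hj => ?_
    rw [Polynomial.eval_mul, Polynomial.eval_prod, dbd, Polynomial.eval_C]
    congr 1
    exact Finset.prod_congr rfl fun l _ => ebd _ _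
  have csign : ∀ k : Fin N, |c k| = (-1)^(k:ℕ) * c k := by
    intro k
    by_cases hk : k = 0
    · subst hk
      simp only [Fin.val_zero, pow_zero, one_mul]
      apply abs_of_nonneg
      rw [cformula]
      apply Finset.sum_nonneg
      intro j hj
      have hj0 : j ≠ 0 := (Finset.mem_erase.mp hj).1
      have h1 : (0:ℝ) < 1 - v j := by have := hvlt1 j hj0; linarith
      have hprod : ∀ l ∈ ((univ.erase (0:Fin N)).erase j), (v 0 - v l)⁻¹ * (1 - v l) = 1 := by
        intro l hl
        have hl0 : l ≠ 0 := (Finset.mem_erase.mp (Finset.mem_erase.mp hl).2).1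
        have h2 : (0:ℝ) < 1 - v l := by have := hvlt1 l hl0; linarith
        rw [hv0]
        field_simp
      rw [Finset.prod_congr rfl hprod, Finset.prod_const_one, one_mul, hv0]
      positivity
    · have hk0 : (0:Fin N) ∈ univ.erase k := Finset.mem_erase.mpr ⟨Ne.symm hk, Finset.mem_univ _⟩
      have hkpos : 1 ≤ (k:ℕ) := Nat.one_le_iff_ne_zero.mpr (fun h => hk (Fin.ext (by simp [h])))
      have hck : c k = (∏ l ∈ ((univ.erase k).erase 0), (v k - v l)⁻¹ * (1 - v l)) * (v k - 1)⁻¹ := by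
        rw [cformula, Finset.sum_eq_single_of_mem 0 hk0]
        · rw [hv0]
        · intro j hj hj0
          apply mul_eq_zero_of_left
          apply Finset.prod_eq_zero (i := (0:Fin N))
          · exact Finset.mem_erase.mpr ⟨Ne.symm hj0, hk0⟩
          · rw [hv0]; ring
      set A := (univ.erase k).erase 0 with hA
      set e : Fin N → ℝ := fun l => (v k - v l)⁻¹ * (1 - v l) with he
      have hBcard : (A.filter (fun l => l < k)).card = (k:ℕ) - 1 := by
        have hAB : A.filter (fun l => l < k) = Finset.Ioo (0:Fin N) k := by
          ext l
          simp only [hA, Finset.mem_filter, Finset.mem_erase, Finset.mem_Ioo, Finset.mem_univ,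
            and_true, Fin.pos_iff_ne_zero]
          constructor
          · rintro ⟨⟨hl0, hlk⟩, hlt⟩; exact ⟨hl0, hlt⟩
          · rintro ⟨hl0, hlt⟩; exact ⟨⟨hl0, ne_of_lt hlt⟩, hlt⟩
        rw [hAB, Fin.card_Ioo]
        simp
      have hnegf : ∀ l ∈ A.filter (fun l => l < k), e l = (-1) * (-(e l)) := by
        intro l _; ring
      have hprodneg : ∏ l ∈ A.filter (fun l => l < k), e l
          = (-1:ℝ)^((k:ℕ)-1) * ∏ l ∈ A.filter (fun l => l < k), (-(e l)) := by
        rw [Finset.prod_congr rfl hnegf, Finset.prod_mul_distrib, Finset.prod_const, hBcard]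
      have hQ1 : (0:ℝ) ≤ ∏ l ∈ A.filter (fun l => l < k), (-(e l)) := by
        apply Finset.prod_nonneg
        intro l hl
        obtain ⟨hlA, hlk⟩ := Finset.mem_filter.mp hl
        have hl0 : l ≠ 0 := (Finset.mem_erase.mp hlA).1
        have h1 : (0:ℝ) < 1 - v l := by have := hvlt1 l hl0; linarith
        have h2 : v k < v l := hanti hlk
        have h3 : (v k - v l)⁻¹ < 0 := inv_lt_zero.mpr (by linarith)
        show (0:ℝ) ≤ -((v k - v l)⁻¹ * (1 - v l))
        nlinarith
      have hQ2 : (0:ℝ) ≤ ∏ l ∈ A.filter (fun l => ¬ l < k), e l := by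
        apply Finset.prod_nonneg
        intro l hl
        obtain ⟨hlA, hlk⟩ := Finset.mem_filter.mp hl
        have hlk' : l ≠ k := (Finset.mem_erase.mp (Finset.mem_erase.mp hlA).2).1
        have hl0 : l ≠ 0 := (Finset.mem_erase.mp hlA).1
        have h1 : (0:ℝ) < 1 - v l := by have := hvlt1 l hl0; linarith
        have h2 : v l < v k := hanti (lt_of_le_of_ne (not_lt.mp hlk) hlk'.symm)
        have h3 : (0:ℝ) < (v k - v l)⁻¹ := inv_pos.mpr (by linarith)
        show (0:ℝ) ≤ (v k - v l)⁻¹ * (1 - v l)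
        nlinarith
      set Q : ℝ := (∏ l ∈ A.filter (fun l => l < k), (-(e l))) * ∏ l ∈ A.filter (fun l => ¬ l < k), e l with hQdef
      have hQ : 0 ≤ Q := mul_nonneg hQ1 hQ2
      have hvk1 : (0:ℝ) < 1 - v k := by have := hvlt1 k hk; linarith
      have hsplit : ∏ l ∈ A, e l = (-1:ℝ)^((k:ℕ)-1) * Q := by
        rw [← Finset.prod_filter_mul_prod_filter_not A (fun l => l < k) e, hprodneg, hQdef]
        ring
      have hck2 : c k = (-1:ℝ)^(k:ℕ) * (Q * (1 - v k)⁻¹) := by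
        rw [hck, hsplit]
        have h4 : (v k - 1)⁻¹ = -(1 - v k)⁻¹ := by
          rw [← neg_sub, inv_neg]
        rw [h4]
        have h5 : (-1:ℝ)^((k:ℕ)-1) * (-1) = (-1:ℝ)^(k:ℕ) := by
          rw [← pow_succ]
          congr 1
          omega
        calc (-1:ℝ)^((k:ℕ)-1) * Q * -(1 - v k)⁻¹
            = ((-1:ℝ)^((k:ℕ)-1) * (-1)) * (Q * (1 - v k)⁻¹) := by ring
          _ = (-1:ℝ)^(k:ℕ) * (Q * (1 - v k)⁻¹) := by rw [h5]
      have hsq : (-1:ℝ)^(k:ℕ) * (-1:ℝ)^(k:ℕ) = 1 := by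
        rw [← pow_add]
        exact Even.neg_one_pow ⟨(k:ℕ), rfl⟩
      rw [hck2, abs_mul, abs_pow, abs_neg, abs_one, one_pow, one_mul,
        abs_of_nonneg (mul_nonneg hQ (le_of_lt (inv_pos.mpr hvk1))), ← mul_assoc, hsq, one_mul]
  have hTeval : ∀ k : Fin N, (Chebyshev.T ℝ (d:ℤ)).eval (v k) = (-1:ℝ)^(k:ℕ) := by
    intro k
    have hvk : v k = Real.cos ((k:ℕ) * π / d) := rfl
    rw [hvk, Chebyshev.T_real_cos]
    have harg : ((d:ℤ):ℝ) * ((k:ℕ) * π / d) = (k:ℕ) * π - 0 := by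
      push_cast
      field_simp
      ring
    rw [harg, Real.cos_nat_mul_pi_sub, Real.cos_zero, mul_one]
  have hsum : ∑ k : Fin N, (-1:ℝ)^(k:ℕ) * c k = (d:ℝ)^2 := by
    have hi := interp (Chebyshev.T ℝ (d:ℤ)) (cheb_natDegree_le d)
    rw [chebT_deriv_one] at hi
    rw [hi]
    exact Finset.sum_congr rfl fun k _ => by rw [hTeval]
  calc |(derivative p).eval 1| = |∑ k, p.eval (v k) * c k| := by rw [interp p hdeg]
    _ ≤ ∑ k, |p.eval (v k) * c k| := Finset.abs_sum_le_sum_abs _ _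
    _ ≤ ∑ k, |c k| := by
        refine Finset.sum_le_sum fun k _ => ?_
        rw [abs_mul]
        exact mul_le_of_le_one_left (abs_nonneg _) (hb (v k) (hvmem k))
    _ = ∑ k : Fin N, (-1:ℝ)^(k:ℕ) * c k := Finset.sum_congr rfl fun k _ => csign k
    _ = (d:ℝ)^2 := hsum

theorem markov01 {d : ℕ} (hd : 1 ≤ d) {S : ℝ} (hS : 0 < S) {q : ℝ[X]} (hdeg : q.natDegree ≤ d)
    (hb : ∀ t ∈ Set.Icc (0:ℝ) 1, |q.eval t| ≤ S) :
    |(derivative q).eval 0| ≤ 2 * (d:ℝ)^2 * S := by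
  set r : ℝ[X] := Polynomial.C (1/2) - Polynomial.C (1/2) * Polynomial.X with hr
  have hrdeg : r.natDegree ≤ 1 := by
    refine le_trans (natDegree_sub_le _ _) ?_
    simp only [max_le_iff]
    exact ⟨by simp, le_trans (natDegree_C_mul_le _ _) (by simp)⟩
  have hreval : ∀ x : ℝ, r.eval x = (1 - x)/2 := by intro x; simp [hr]; ring
  set p : ℝ[X] := Polynomial.C S⁻¹ * (q.comp r) with hp
  have hpdeg : p.natDegree ≤ d := by
    refine le_trans (natDegree_C_mul_le _ _) (le_trans (natDegree_comp_le) ?_)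
    calc q.natDegree * r.natDegree ≤ d * 1 := Nat.mul_le_mul hdeg hrdeg
      _ = d := mul_one d
  have hpb : ∀ x ∈ Set.Icc (-1:ℝ) 1, |p.eval x| ≤ 1 := by
    intro x hx
    obtain ⟨hx1, hx2⟩ := hx
    rw [hp, Polynomial.eval_mul, Polynomial.eval_C, Polynomial.eval_comp, hreval, abs_mul, abs_inv, abs_of_pos hS]
    have harg : (1 - x)/2 ∈ Set.Icc (0:ℝ) 1 := ⟨by linarith, by linarith⟩
    have hq := hb _ harg
    rw [inv_mul_le_iff₀ hS]
    simpa using hq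
  have h1 := markov_endpoint hd hpdeg hpb
  have hd1 : (derivative p).eval 1 = S⁻¹ * (-(1:ℝ)/2) * (derivative q).eval 0 := by
    rw [hp]
    rw [derivative_mul, derivative_C, zero_mul, derivative_comp]
    have hdr : derivative r = - Polynomial.C (1/2) := by
      rw [hr]; simp
    rw [hdr]
    simp only [Polynomial.eval_add, Polynomial.eval_zero, Polynomial.eval_mul, Polynomial.eval_C, Polynomial.eval_neg, Polynomial.eval_comp, hreval]
    norm_num
    ring
  rw [hd1, abs_mul, abs_mul, abs_inv, abs_of_pos hS] at h1
  have : |(-(1:ℝ)/2)| = 1/2 := by norm_num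
  rw [this] at h1
  have h2 : S * (S⁻¹ * (1/2) * |(derivative q).eval 0|) ≤ S * ((d:ℝ)^2) :=
    mul_le_mul_of_nonneg_left h1 (le_of_lt hS)
  have h3 : S * (S⁻¹ * (1/2) * |(derivative q).eval 0|) = (1/2) * |(derivative q).eval 0| := by
    field_simp
  rw [h3] at h2
  linarith

theorem derivative_aeval_line {n : ℕ} (f : MvPolynomial (Fin n) ℝ) (g : Fin n → ℝ[X]) :
    derivative (MvPolynomial.aeval g f)
      = ∑ i, MvPolynomial.aeval g (MvPolynomial.pderiv i f) * derivative (g i) := by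
  induction f using MvPolynomial.induction_on with
  | C a => simp
  | add p q hp hq =>
    simp only [map_add, derivative_add, hp, hq, ← Finset.sum_add_distrib, add_mul]
  | mul_X p i hp =>
    rw [map_mul, MvPolynomial.aeval_X, derivative_mul, hp]
    symm
    calc ∑ j : Fin n, MvPolynomial.aeval g (MvPolynomial.pderiv j (p * MvPolynomial.X i))
            * derivative (g j)
        = ∑ j : Fin n, ((MvPolynomial.aeval g (MvPolynomial.pderiv j p) * derivative (g j)) * g i
            + MvPolynomial.aeval g p
              * (MvPolynomial.aeval g (MvPolynomial.pderiv j (MvPolynomial.X i))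
                  * derivative (g j))) :=
          Finset.sum_congr rfl fun j _ => by
            rw [MvPolynomial.pderiv_mul, map_add, map_mul, map_mul, MvPolynomial.aeval_X]
            ring
      _ = (∑ j : Fin n, MvPolynomial.aeval g (MvPolynomial.pderiv j p) * derivative (g j)) * g i
            + MvPolynomial.aeval g p * derivative (g i) := by
          rw [Finset.sum_add_distrib, Finset.sum_mul, ← Finset.mul_sum]
          congr 1
          rw [Finset.sum_eq_single i]
          · rw [MvPolynomial.pderiv_X_self, map_one, one_mul]
          · intro j _ hji
            rw [MvPolynomial.pderiv_X_of_ne (Ne.symm hji)]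
            simp
          · intro h; exact absurd (Finset.mem_univ i) h

lemma eval_aeval_line {n : ℕ} (f : MvPolynomial (Fin n) ℝ) (z w : Fin n → ℝ) (t : ℝ) :
    (MvPolynomial.aeval (fun i => Polynomial.C (z i) + Polynomial.C (w i) * Polynomial.X) f).eval t
      = MvPolynomial.eval (fun i => z i + w i * t) f := by
  induction f using MvPolynomial.induction_on with
  | C a => simp
  | add p q hp hq => simp [hp, hq]
  | mul_X p i hp => simp [hp]

lemma natDegree_aeval_line {n : ℕ} (f : MvPolynomial (Fin n) ℝ) (g : Fin n → ℝ[X])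
    (hg : ∀ i, (g i).natDegree ≤ 1) :
    (MvPolynomial.aeval g f).natDegree ≤ f.totalDegree := by
  conv_lhs => rw [f.as_sum]
  rw [map_sum]
  refine natDegree_sum_le_of_forall_le _ _ ?_
  intro α hα
  rw [MvPolynomial.aeval_monomial]
  refine le_trans (natDegree_mul_le) ?_
  have h1 : (algebraMap ℝ ℝ[X] (MvPolynomial.coeff α f)).natDegree = 0 := natDegree_C _
  rw [h1, zero_add]
  refine le_trans ?_ (MvPolynomial.le_totalDegree hα)
  rw [Finsupp.prod]
  refine le_trans (natDegree_prod_le _ _) ?_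
  rw [Finsupp.sum]
  refine Finset.sum_le_sum ?_
  intro i _
  refine le_trans (natDegree_pow_le) ?_
  calc α i * (g i).natDegree ≤ α i * 1 := Nat.mul_le_mul_left _ (hg i)
    _ = α i := mul_one _

end AuxMarkov

open Polynomial Finset Real in
lemma lipschitz_box {n : ℕ} (f : MvPolynomial (Fin n) ℝ) {d : ℕ} (hd1 : 1 ≤ d)
    (hdeg : f.totalDegree ≤ d) {S : ℝ} (hS : 0 < S)
    (hb : ∀ z ∈ Box n, |MvPolynomial.eval z f| ≤ S)
    {x y : Fin n → ℝ} (hx : x ∈ Box n) (hy : y ∈ Box n) :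
    |MvPolynomial.eval y f - MvPolynomial.eval x f|
      ≤ 2 * (d:ℝ)^2 * S * Real.sqrt (∑ i, (x i - y i)^2) := by
  set lineP : (Fin n → ℝ) → (Fin n → ℝ) → ℝ[X] := fun z w =>
    MvPolynomial.aeval (fun i => Polynomial.C (z i) + Polynomial.C (w i) * Polynomial.X) f
    with hlineP
  have hgdeg : ∀ z w : Fin n → ℝ, ∀ i : Fin n,
      (Polynomial.C (z i) + Polynomial.C (w i) * Polynomial.X).natDegree ≤ 1 := by
    intro z w i
    refine le_trans (natDegree_add_le _ _) ?_
    simp only [max_le_iff, natDegree_C, Nat.zero_le, true_and]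
    exact le_trans (natDegree_C_mul_le _ _) natDegree_X_le
  have hlindeg : ∀ z w : Fin n → ℝ, (lineP z w).natDegree ≤ d :=
    fun z w => le_trans (natDegree_aeval_line f _ (hgdeg z w)) hdeg
  have hDt : ∀ z w : Fin n → ℝ, ∀ t : ℝ, (derivative (lineP z w)).eval t
      = ∑ i, MvPolynomial.eval (fun j => z j + w j * t) (MvPolynomial.pderiv i f) * w i := by
    intro z w t
    rw [hlineP]
    rw [derivative_aeval_line, eval_finset_sum]
    refine Finset.sum_congr rfl fun i _ => ?_
    rw [Polynomial.eval_mul, eval_aeval_line]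
    congr 1
    simp
  have segD : ∀ z w : Fin n → ℝ, z ∈ Box n → (∀ i, |z i + w i| ≤ 1) →
      |∑ i, MvPolynomial.eval z (MvPolynomial.pderiv i f) * w i| ≤ 2*(d:ℝ)^2*S := by
    intro z w hz hzw
    have hz' : ∀ i, |z i| ≤ 1 := hz
    have hbq : ∀ t ∈ Set.Icc (0:ℝ) 1, |(lineP z w).eval t| ≤ S := by
      intro t ht
      obtain ⟨ht0, ht1⟩ := ht
      rw [hlineP]
      rw [eval_aeval_line]
      apply hb
      intro i
      show |z i + w i * t| ≤ 1
      have h1 : z i + w i * t = (1-t)*(z i) + t*(z i + w i) := by ring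
      rw [h1]
      calc |(1-t)*(z i) + t*(z i + w i)| ≤ |(1-t)*(z i)| + |t*(z i + w i)| := abs_add_le _ _
        _ = (1-t)*|z i| + t*|z i + w i| := by
            rw [abs_mul, abs_mul, abs_of_nonneg (by linarith : (0:ℝ) ≤ 1 - t),
              abs_of_nonneg ht0]
        _ ≤ (1-t)*1 + t*1 := add_le_add
            (mul_le_mul_of_nonneg_left (hz' i) (by linarith))
            (mul_le_mul_of_nonneg_left (hzw i) ht0)
        _ = 1 := by ring
    have hm := markov01 hd1 hS (hlindeg z w) hbq
    rw [hDt z w 0] at hm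
    have harg : (fun j => z j + w j * 0) = z := by funext j; ring
    rw [harg] at hm
    exact hm
  have hptw : ∀ z ∈ Box n, ∀ v : Fin n → ℝ,
      |∑ i, MvPolynomial.eval z (MvPolynomial.pderiv i f) * v i|
        ≤ 2*(d:ℝ)^2*S * Real.sqrt (∑ i, (v i)^2) := by
    intro z hz v
    set e := Real.sqrt (∑ i, (v i)^2) with he
    have hsnn : (0:ℝ) ≤ ∑ i, (v i)^2 := Finset.sum_nonneg fun i _ => sq_nonneg _
    have henn : 0 ≤ e := Real.sqrt_nonneg _
    rcases eq_or_lt_of_le henn with he0 | hepos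
    · have hsum0 : ∑ i, (v i)^2 = 0 := (Real.sqrt_eq_zero hsnn).mp he0.symm
      have hv0 : ∀ i, v i = 0 := by
        intro i
        have h := (Finset.sum_eq_zero_iff_of_nonneg (fun i _ => sq_nonneg (v i))).mp hsum0 i
          (Finset.mem_univ i)
        exact (pow_eq_zero_iff two_ne_zero).mp h
      have hzero : ∑ i, MvPolynomial.eval z (MvPolynomial.pderiv i f) * v i = 0 :=
        Finset.sum_eq_zero fun i _ => by rw [hv0 i, mul_zero]
      rw [hzero, abs_zero]
      positivity
    · have hvle : ∀ i, |v i| ≤ e := by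
        intro i
        rw [he]
        calc |v i| = Real.sqrt ((v i)^2) := (Real.sqrt_sq_eq_abs _).symm
          _ ≤ _ := Real.sqrt_le_sqrt (Finset.single_le_sum
              (fun i _ => sq_nonneg (v i)) (Finset.mem_univ i))
      set u : Fin n → ℝ := fun i => v i / e with hu
      have heu : ∀ i, e * u i = v i := by
        intro i
        rw [hu]
        field_simp
      have hu1 : ∀ i, |u i| ≤ 1 := by
        intro i
        rw [hu]
        simp only []
        rw [abs_div, abs_of_pos hepos, div_le_one hepos]
        exact hvle i
      have hw1 := segD z (fun i => u i - z i) hz (fun i => by simpa using hu1 i)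
      have hw2 := segD z (fun i => -(u i) - z i) hz (fun i => by simpa using hu1 i)
      set A := ∑ i, MvPolynomial.eval z (MvPolynomial.pderiv i f) * (u i - z i) with hA
      set B := ∑ i, MvPolynomial.eval z (MvPolynomial.pderiv i f) * (-(u i) - z i) with hB
      have hlin : ∑ i, MvPolynomial.eval z (MvPolynomial.pderiv i f) * v i
          = (e/2) * (A - B) := by
        rw [hA, hB, ← Finset.sum_sub_distrib, Finset.mul_sum]
        refine Finset.sum_congr rfl fun i _ => ?_
        have h := heu i
        linear_combination (-(MvPolynomial.eval z (MvPolynomial.pderiv i f))) * h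
      rw [hlin, abs_mul, abs_of_nonneg (by linarith : (0:ℝ) ≤ e/2)]
      have habs : |A - B| ≤ 2*(d:ℝ)^2*S + 2*(d:ℝ)^2*S :=
        le_trans (abs_sub A B) (add_le_add hw1 hw2)
      calc (e/2) * |A - B| ≤ (e/2) * (2*(d:ℝ)^2*S + 2*(d:ℝ)^2*S) :=
            mul_le_mul_of_nonneg_left habs (by linarith)
        _ = 2*(d:ℝ)^2*S * e := by ring
  set w : Fin n → ℝ := fun i => y i - x i with hw
  set q : ℝ[X] := lineP x w with hq
  have hcont : ContinuousOn (fun t : ℝ => q.eval t) (Set.Icc 0 1) :=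
    (Polynomial.continuous q).continuousOn
  have hderiv : ∀ t ∈ Set.Ioo (0:ℝ) 1, HasDerivAt (fun t : ℝ => q.eval t)
      ((derivative q).eval t) t := fun t _ => q.hasDerivAt t
  obtain ⟨ξ, hξ, hslope⟩ := exists_hasDerivAt_eq_slope (fun t : ℝ => q.eval t)
    (fun t => (derivative q).eval t) one_pos hcont hderiv
  have hq0 : q.eval 0 = MvPolynomial.eval x f := by
    rw [hq, hlineP, eval_aeval_line]
    have hpt : (fun i => x i + w i * 0) = x := by funext j; ring
    rw [hpt]
  have hq1 : q.eval 1 = MvPolynomial.eval y f := by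
    rw [hq, hlineP, eval_aeval_line]
    have hpt : (fun i => x i + w i * 1) = y := by funext j; simp [hw]
    rw [hpt]
  have hx' : ∀ i, |x i| ≤ 1 := hx
  have hy' : ∀ i, |y i| ≤ 1 := hy
  have hxiBox : (fun j => x j + w j * ξ) ∈ Box n := by
    intro i
    obtain ⟨h0, h1⟩ := hξ
    show |x i + w i * ξ| ≤ 1
    have hrw : x i + w i * ξ = (1-ξ)*(x i) + ξ*(y i) := by simp [hw]; ring
    rw [hrw]
    calc |(1-ξ)*(x i) + ξ*(y i)| ≤ |(1-ξ)*(x i)| + |ξ*(y i)| := abs_add_le _ _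
      _ = (1-ξ)*|x i| + ξ*|y i| := by
          rw [abs_mul, abs_mul, abs_of_nonneg (by linarith : (0:ℝ) ≤ 1-ξ),
            abs_of_nonneg h0.le]
      _ ≤ (1-ξ)*1 + ξ*1 := add_le_add
          (mul_le_mul_of_nonneg_left (hx' i) (by linarith))
          (mul_le_mul_of_nonneg_left (hy' i) h0.le)
      _ = 1 := by ring
  have hval : MvPolynomial.eval y f - MvPolynomial.eval x f = (derivative q).eval ξ := by
    rw [hslope, hq0, hq1]
    ring
  rw [hval, hq, hDt x w ξ]
  have hsum_eq : ∑ i, (x i - y i)^2 = ∑ i, (w i)^2 := by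
    refine Finset.sum_congr rfl fun i _ => ?_
    rw [hw]
    ring
  rw [hsum_eq]
  exact hptw _ hxiBox w

set_option maxHeartbeats 1000000 in
/-- error bound on minima via the Łojasiewicz inequality. -/
theorem stmt11 {n m : ℕ} (f : MvPolynomial (Fin n) ℝ) (d : ℕ) (hd : f.totalDegree = d)
    (g : Fin m → MvPolynomial (Fin n) ℝ)
    (hne : (Sg g).Nonempty) (hsub : Sg g ⊆ Box n)
    (L c : ℝ) (hL : 1 ≤ L) (hc : 0 < c)
    (hLoj : ∀ x ∈ Box n, euclDist x (Sg g) ^ L ≤ c * Gfun g x)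
    (hfmin : 0 < fMin g f) :
    ∀ x ∈ Box n,
      max 0 (fMin g f - MvPolynomial.eval x f)
        ≤ (1/2) * c ^ 2 * (4 * (d : ℝ) ^ 2 * (supNorm f / fMin g f)) ^ (2 * L)
            * fMin g f * Hfun g x
          + (1/2) * fMin g f := by
  intro x hx
  classical
  have hboxeq : Box n = Set.pi Set.univ (fun _ : Fin n => Set.Icc (-1:ℝ) 1) := by
    ext z
    simp [Box, Set.mem_pi, abs_le, Pi.le_def, forall_and]
  have hboxcompact : IsCompact (Box n) := by
    rw [hboxeq]; exact isCompact_univ_pi (fun _ => isCompact_Icc)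
  have hcont : Continuous (fun z : Fin n → ℝ => MvPolynomial.eval z f) :=
    MvPolynomial.continuous_eval f
  have hSbound : ∀ z ∈ Box n, |MvPolynomial.eval z f| ≤ supNorm f := by
    intro z hz
    refine le_csSup ?_ ⟨z, hz, rfl⟩
    exact (hboxcompact.image (continuous_abs.comp hcont)).bddAbove
  have hSgclosed : IsClosed (Sg g) := by
    have hSgeq : Sg g = ⋂ j, {z : Fin n → ℝ | 0 ≤ MvPolynomial.eval z (g j)} := by
      ext z; simp [Sg, Set.mem_iInter]
    rw [hSgeq]
    exact isClosed_iInter fun j => isClosed_le continuous_const (MvPolynomial.continuous_eval _)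
  have hSgcompact : IsCompact (Sg g) := hboxcompact.of_isClosed_subset hSgclosed hsub
  have hFle : ∀ y ∈ Sg g, fMin g f ≤ MvPolynomial.eval y f := by
    intro y hy
    exact csInf_le (hSgcompact.image hcont).bddBelow ⟨y, hy, rfl⟩
  obtain ⟨y₀, hy₀⟩ := hne
  have hSF : fMin g f ≤ supNorm f :=
    le_trans (hFle y₀ hy₀) (le_trans (le_abs_self _) (hSbound y₀ (hsub hy₀)))
  have hSpos : 0 < supNorm f := lt_of_lt_of_le hfmin hSF
  have hHnn : 0 ≤ Hfun g x := Finset.sum_nonneg fun j _ => sq_nonneg _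
  have hbase_nn : (0:ℝ) ≤ 4 * (d:ℝ)^2 * (supNorm f / fMin g f) := by positivity
  have hrp_nn : (0:ℝ) ≤ (4 * (d:ℝ)^2 * (supNorm f / fMin g f)) ^ (2*L) :=
    Real.rpow_nonneg hbase_nn _
  have hterm1 : 0 ≤ 1/2 * c^2 * (4*(d:ℝ)^2*(supNorm f / fMin g f)) ^ (2*L)
      * fMin g f * Hfun g x := by positivity
  by_cases hΔ : fMin g f - MvPolynomial.eval x f ≤ 1/2 * fMin g f
  · have h1 : max 0 (fMin g f - MvPolynomial.eval x f) ≤ 1/2 * fMin g f :=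
      max_le (by linarith) hΔ
    linarith
  · push_neg at hΔ
    have hΔpos : 0 < fMin g f - MvPolynomial.eval x f := by linarith
    by_cases hd0 : d = 0
    · exfalso
      rw [hd0] at hd
      have hall := (MvPolynomial.totalDegree_eq_zero_iff _ f).mp hd
      have heqc : ∀ z : Fin n → ℝ,
          MvPolynomial.eval z f = ∑ α ∈ f.support, MvPolynomial.coeff α f := by
        intro z
        rw [MvPolynomial.eval_eq]
        refine Finset.sum_congr rfl fun α hα => ?_
        have hαz : α = 0 := Finsupp.ext fun i => hall α hα i
        rw [hαz]
        simp
      have hxy := hFle y₀ hy₀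
      rw [heqc y₀] at hxy
      rw [heqc x] at hΔ
      linarith
    have hd1 : 1 ≤ d := Nat.one_le_iff_ne_zero.mpr hd0
    have hdR : (0:ℝ) < d := by exact_mod_cast hd1
    set F := fMin g f with hFdef
    set S := supNorm f with hSdef
    set Δ := F - MvPolynomial.eval x f with hΔdef
    set M := 2*(d:ℝ)^2*S with hMdef
    have hMpos : 0 < M := by positivity
    have hF0 : F ≠ 0 := ne_of_gt hfmin
    have hS0 : S ≠ 0 := ne_of_gt hSpos
    have hdistb : ∀ y ∈ Sg g, Δ / M ≤ Real.sqrt (∑ i, (x i - y i)^2) := by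
      intro y hy
      have hlip := lipschitz_box f hd1 (le_of_eq hd) hSpos hSbound hx (hsub hy)
      have h2 : Δ ≤ MvPolynomial.eval y f - MvPolynomial.eval x f := by
        have := hFle y hy
        rw [hΔdef]
        linarith
      have h3 : Δ ≤ M * Real.sqrt (∑ i, (x i - y i)^2) :=
        le_trans h2 (le_trans (le_abs_self _) hlip)
      rw [div_le_iff₀ hMpos]
      linarith
    have hrge : Δ / M ≤ euclDist x (Sg g) := by
      refine le_csInf ⟨_, Set.mem_image_of_mem _ hy₀⟩ ?_
      rintro b ⟨y, hy, rfl⟩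
      exact hdistb y hy
    have hΔMnn : 0 ≤ Δ / M := by positivity
    have hrnn : 0 ≤ euclDist x (Sg g) := le_trans hΔMnn hrge
    have hGle : Gfun g x ≤ Real.sqrt (Hfun g x) := by
      rcases Nat.eq_zero_or_pos m with hm | hm
      · have hie : IsEmpty (Fin m) := by rw [hm]; exact Fin.isEmpty'
        have : Gfun g x = 0 := Real.iSup_of_isEmpty _
        rw [this]
        exact Real.sqrt_nonneg _
      · have hne' : Nonempty (Fin m) := ⟨⟨0, hm⟩⟩
        refine ciSup_le fun j => ?_
        have h1 : max 0 (-(MvPolynomial.eval x (g j)))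
            = Real.sqrt ((max 0 (-(MvPolynomial.eval x (g j))))^2) :=
          (Real.sqrt_sq (le_max_left _ _)).symm
        rw [h1]
        exact Real.sqrt_le_sqrt (Finset.single_le_sum
          (f := fun j => (max 0 (-(MvPolynomial.eval x (g j))))^2)
          (fun j _ => sq_nonneg _) (Finset.mem_univ j))
    have hLoj2 : euclDist x (Sg g) ^ L ≤ c * Real.sqrt (Hfun g x) :=
      le_trans (hLoj x hx) (mul_le_mul_of_nonneg_left hGle hc.le)
    have hrLnn : 0 ≤ euclDist x (Sg g) ^ L := Real.rpow_nonneg hrnn L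
    have hr2L : euclDist x (Sg g) ^ (2*L) ≤ c^2 * Hfun g x := by
      have h1 : euclDist x (Sg g) ^ (2*L) = (euclDist x (Sg g) ^ L)^2 := by
        rw [mul_comm, Real.rpow_mul hrnn, Real.rpow_two]
      have h2 : (euclDist x (Sg g) ^ L)^2 ≤ (c * Real.sqrt (Hfun g x))^2 :=
        pow_le_pow_left₀ hrLnn hLoj2 2
      rw [h1]
      calc (euclDist x (Sg g) ^ L)^2 ≤ (c * Real.sqrt (Hfun g x))^2 := h2
        _ = c^2 * Hfun g x := by rw [mul_pow, Real.sq_sqrt hHnn]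
    have hΔM2L : (Δ/M) ^ (2*L) ≤ c^2 * Hfun g x :=
      le_trans (Real.rpow_le_rpow hΔMnn hrge (by linarith)) hr2L
    set B := 4*(d:ℝ)^2*(S/F) with hBdef
    have hBid : B * (Δ/M) = 2*Δ/F := by
      rw [hBdef, hMdef]
      field_simp
      ring
    have hBnn : 0 ≤ B := by positivity
    have ht1 : 1 ≤ 2*Δ/F := by
      rw [le_div_iff₀ hfmin]
      linarith
    have hrpmul : B^(2*L) * (Δ/M)^(2*L) = (2*Δ/F)^(2*L) := by
      rw [← Real.mul_rpow hBnn hΔMnn, hBid]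
    have htt : (2*Δ/F)^(2:ℝ) ≤ (2*Δ/F)^(2*L) :=
      Real.rpow_le_rpow_of_exponent_le ht1 (by linarith)
    have hΔt : Δ ≤ 1/2*F*((2*Δ/F)^(2:ℝ)) := by
      rw [Real.rpow_two]
      have hexp : 1/2*F*((2*Δ/F)^2) = 2*Δ^2/F := by
        field_simp
      rw [hexp, le_div_iff₀ hfmin]
      nlinarith
    have hchain : Δ ≤ 1/2 * c^2 * B^(2*L) * F * Hfun g x := by
      calc Δ ≤ 1/2*F*((2*Δ/F)^(2:ℝ)) := hΔt
        _ ≤ 1/2*F*((2*Δ/F)^(2*L)) :=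
            mul_le_mul_of_nonneg_left htt (by positivity)
        _ = 1/2*F*(B^(2*L) * (Δ/M)^(2*L)) := by rw [hrpmul]
        _ ≤ 1/2*F*(B^(2*L) * (c^2 * Hfun g x)) := by
            refine mul_le_mul_of_nonneg_left ?_ (by positivity)
            exact mul_le_mul_of_nonneg_left hΔM2L (Real.rpow_nonneg hBnn _)
        _ = 1/2 * c^2 * B^(2*L) * F * Hfun g x := by ring
    have hmax : max 0 Δ = Δ := max_eq_right hΔpos.le
    rw [hmax]
    linarith
end

section
/- Let p be a homogeneous real polynomial in n variables of degree k, with coefficients p_α in the monomial basis. Then max_{α : ‖α‖₁ = k} |p_α|·(α!/k!) ≤ (2e)^k · sup_{x ∈ [0,1]ⁿ} |p(x)|, where α! := α₁!⋯α_n! and e is Euler's number. -/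
open MvPolynomial

section helpers0
open Finset

lemma neg_one_pow_sub (m b : ℕ) (h : b ≤ m) : (-1:ℝ)^(m-b) = (-1)^m * (-1)^b := by
  have h1 : (-1:ℝ)^(m-b) * (-1:ℝ)^b = (-1)^m := by rw [← pow_add]; congr 1; omega
  have h2 : (-1:ℝ)^b * (-1:ℝ)^b = 1 := by rw [← mul_pow]; norm_num
  calc (-1:ℝ)^(m-b) = ((-1)^(m-b) * (-1)^b) * (-1)^b := by rw [mul_assoc, h2, mul_one]
    _ = (-1)^m * (-1)^b := by rw [h1]

lemma altsum_zero (m : ℕ) (hm : m ≠ 0) :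
    ∑ b ∈ range (m+1), (-1:ℝ)^b * (m.choose b) = 0 := by
  have h := Int.alternating_sum_range_choose_of_ne hm
  have : ((∑ i ∈ range (m+1), (-1:ℤ)^i * (m.choose i) : ℤ) : ℝ) = 0 := by rw [h]; norm_num
  push_cast at this
  convert this using 2

lemma sumAB (a : ℕ) : ∀ g : ℕ, g ≤ a →
    ∑ b ∈ range (a+1), (-1:ℝ)^(a-b) * (a.choose b) * (b:ℝ)^g
      = if g = a then (a.factorial : ℝ) else 0 := by
  induction a with
  | zero =>
    intro g hg
    interval_cases g
    simp
  | succ a IH =>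
    intro g hg
    match g with
    | 0 =>
      rw [if_neg (by omega)]
      have : ∀ b ∈ range (a+2), (-1:ℝ)^(a+1-b) * ((a+1).choose b) * (b:ℝ)^0
          = (-1:ℝ)^(a+1) * ((-1:ℝ)^b * ((a+1).choose b)) := by
        intro b hb
        simp only [mem_range] at hb
        rw [pow_zero, mul_one, neg_one_pow_sub (a+1) b (by omega), mul_assoc]
      rw [Finset.sum_congr rfl this, ← mul_sum, altsum_zero (a+1) (by omega), mul_zero]
    | (g'+1) =>
      have hg' : g' ≤ a := by omega
      rw [Finset.sum_range_succ']
      simp only [Nat.cast_zero, zero_pow (Nat.succ_ne_zero g'), mul_zero, add_zero]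
      have step : ∀ c ∈ range (a+1),
          (-1:ℝ)^(a+1-(c+1)) * ((a+1).choose (c+1)) * ((c+1:ℕ):ℝ)^(g'+1)
          = (a+1:ℝ) * ∑ j ∈ range (g'+1), (g'.choose j) *
              ((-1:ℝ)^(a-c) * (a.choose c) * (c:ℝ)^j) := by
        intro c hc
        simp only [mem_range] at hc
        have hch : (((a+1).choose (c+1) : ℕ) : ℝ) * ((c:ℝ)+1) = ((a:ℝ)+1) * ((a.choose c : ℕ) : ℝ) := by
          have h := (Nat.add_one_mul_choose_eq a c).symm
          have h2 : (((a+1).choose (c+1) * (c+1) : ℕ) : ℝ) = (((a+1) * a.choose c : ℕ) : ℝ) := by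
            exact_mod_cast congrArg (Nat.cast : ℕ → ℝ) h
          push_cast at h2
          linarith
        have hbin : ((c:ℝ)+1)^g' = ∑ j ∈ range (g'+1), (c:ℝ)^j * (g'.choose j) := by
          rw [add_pow]; refine Finset.sum_congr rfl fun j _ => by rw [one_pow, mul_one]
        have h1 : a+1-(c+1) = a-c := by omega
        have key : (((a+1).choose (c+1) : ℕ) : ℝ) * ((c:ℝ)+1)^(g'+1)
            = ((a:ℝ)+1) * ((a.choose c : ℕ) : ℝ) * ((c:ℝ)+1)^g' := by
          rw [pow_succ, ← mul_assoc, mul_assoc _ _ ((c:ℝ)+1)]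
          calc (((a+1).choose (c+1):ℕ):ℝ) * (((c:ℝ)+1)^g' * (((c:ℝ)+1)))
              = ((((a+1).choose (c+1):ℕ):ℝ) * ((c:ℝ)+1)) * ((c:ℝ)+1)^g' := by ring
            _ = _ := by rw [hch]
        push_cast
        rw [mul_assoc]
        push_cast at key
        rw [key, hbin]
        simp only [Finset.mul_sum]
        exact Finset.sum_congr rfl fun j _ => by ring
      rw [Finset.sum_congr rfl step, ← mul_sum, Finset.sum_comm]
      have inner : ∀ j ∈ range (g'+1),
          ∑ c ∈ range (a+1), (g'.choose j : ℝ) * ((-1:ℝ)^(a-c) * (a.choose c) * (c:ℝ)^j)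
          = if j = a then (g'.choose j : ℝ) * a.factorial else 0 := by
        intro j hj
        simp only [mem_range] at hj
        rw [← mul_sum, IH j (by omega)]
        split <;> simp
      rw [Finset.sum_congr rfl inner, Finset.sum_ite_eq' (range (g'+1)) a]
      by_cases hga : g' = a
      · subst hga
        rw [if_pos (by simp), if_pos rfl]
        push_cast [Nat.factorial_succ, Nat.choose_self]
        ring
      · rw [if_neg (by simp; omega), if_neg (by omega), mul_zero]

end helpers0

section helpers
open Finset MvPolynomial
lemma factor (a g : ℕ) (hg : g ≤ a) :
    ∑ b ∈ range (a+1), (-1:ℝ)^(a-b) * (a.choose b) * ((b:ℝ)/(a:ℝ))^g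
      = if g = a then (a.factorial : ℝ)/((a:ℝ))^a else 0 := by
  rcases Nat.eq_zero_or_pos a with h0 | hpos
  · subst h0; interval_cases g; simp
  · have ha : (a:ℝ) ≠ 0 := by positivity
    have h1 : ∀ b ∈ range (a+1), (-1:ℝ)^(a-b) * (a.choose b) * ((b:ℝ)/(a:ℝ))^g
        = ((-1:ℝ)^(a-b) * (a.choose b) * (b:ℝ)^g) * (((a:ℝ))^g)⁻¹ := by
      intro b _
      rw [div_pow]; ring
    rw [Finset.sum_congr rfl h1, ← Finset.sum_mul, sumAB a g hg]
    by_cases h : g = a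
    · subst h; rw [if_pos rfl, if_pos rfl, div_eq_mul_inv]
    · rw [if_neg h, if_neg h, zero_mul]

lemma keyId {n : ℕ} (p : MvPolynomial (Fin n) ℝ) (k : ℕ) (hp : p.IsHomogeneous k)
    (α : Fin n →₀ ℕ) (hα : ∑ i, α i = k) :
    ∑ β ∈ Fintype.piFinset (fun i => Finset.range (α i + 1)),
      (∏ i, ((-1:ℝ)^(α i - β i) * ((α i).choose (β i)))) *
        MvPolynomial.eval (fun i => (β i : ℝ) / (α i : ℝ)) p
    = MvPolynomial.coeff α p * ∏ i, ((α i).factorial : ℝ) / ((α i : ℝ))^(α i) := by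
  have hdeg : ∀ γ : Fin n →₀ ℕ, coeff γ p ≠ 0 → ∑ i, γ i = k := by
    intro γ hγ
    have h1 : γ.degree = k := by
      rw [Finsupp.degree_eq_weight_one]; exact hp hγ
    rw [← h1, Finsupp.degree]
    exact (Finset.sum_subset (Finset.subset_univ _)
      (fun i _ hi => Finsupp.notMem_support_iff.mp hi)).symm
  set D := Fintype.piFinset (fun i => Finset.range (α i + 1)) with hD
  have Tval : ∀ γ : Fin n →₀ ℕ, (∑ i, γ i = k) →
      ∑ β ∈ D, (∏ i, ((-1:ℝ)^(α i - β i) * ((α i).choose (β i)))) *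
        (coeff γ p * ∏ i, ((β i : ℝ)/(α i : ℝ))^(γ i))
      = coeff γ p * (if γ = α then ∏ i, ((α i).factorial : ℝ)/((α i:ℝ))^(α i) else 0) := by
    intro γ hγ
    have hstep : ∀ β ∈ D, (∏ i, ((-1:ℝ)^(α i - β i) * ((α i).choose (β i)))) *
        (coeff γ p * ∏ i, ((β i : ℝ)/(α i : ℝ))^(γ i))
        = coeff γ p * ∏ i, (((-1:ℝ)^(α i - β i) * ((α i).choose (β i))) *
            ((β i : ℝ)/(α i : ℝ))^(γ i)) := by
      intro β _
      rw [mul_left_comm, ← Finset.prod_mul_distrib]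
    rw [Finset.sum_congr rfl hstep, ← Finset.mul_sum, hD,
      ← Finset.prod_univ_sum (fun i => Finset.range (α i + 1))
        (fun i b => (-1:ℝ)^(α i - b) * (((α i).choose b : ℕ) : ℝ) * ((b:ℝ)/((α i : ℕ):ℝ))^(γ i))]
    congr 1
    by_cases hga : γ = α
    · subst hga
      rw [if_pos rfl]
      refine Finset.prod_congr rfl fun i _ => ?_
      rw [factor (γ i) (γ i) le_rfl, if_pos rfl]
    · rw [if_neg hga]
      obtain ⟨i0, hi0⟩ : ∃ i, γ i < α i := by
        by_contra h
        push_neg at h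
        exact hga (Finsupp.ext fun i =>
          ((Finset.sum_eq_sum_iff_of_le (fun i _ => h i)).mp (hα.trans hγ.symm) i
            (Finset.mem_univ i)).symm)
      exact Finset.prod_eq_zero (Finset.mem_univ i0)
        (by rw [factor (α i0) (γ i0) hi0.le, if_neg hi0.ne])
  have heval : ∀ β ∈ D, (∏ i, ((-1:ℝ)^(α i - β i) * ((α i).choose (β i)))) *
      MvPolynomial.eval (fun i => (β i : ℝ) / (α i : ℝ)) p
      = ∑ γ ∈ p.support, (∏ i, ((-1:ℝ)^(α i - β i) * ((α i).choose (β i)))) *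
        (coeff γ p * ∏ i, ((β i : ℝ)/(α i : ℝ))^(γ i)) := by
    intro β _
    rw [MvPolynomial.eval_eq', Finset.mul_sum]
  rw [Finset.sum_congr rfl heval, Finset.sum_comm]
  rw [Finset.sum_congr rfl (fun γ hγ => Tval γ (hdeg γ (mem_support_iff.mp hγ)))]
  simp only [mul_ite, mul_zero]
  rw [Finset.sum_ite_eq' p.support α]
  by_cases hmem : α ∈ p.support
  · rw [if_pos hmem]
  · rw [if_neg hmem, notMem_support_iff.mp hmem, zero_mul]

end helpers

/-- coefficient bound for homogeneous polynomials on `[0,1]^n`. -/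
theorem stmt15 {n : ℕ} (p : MvPolynomial (Fin n) ℝ) (k : ℕ)
    (hp : p.IsHomogeneous k) :
    ∀ α : Fin n →₀ ℕ, (∑ i, α i) = k →
      |MvPolynomial.coeff α p| * ((∏ i, (α i).factorial : ℕ) : ℝ) / (k.factorial : ℝ)
        ≤ (2 * Real.exp 1) ^ k * supNorm01 p := by
  intro α hα
  -- basic facts on the sup norm
  have hBox : Box01 n = Set.Icc (0 : Fin n → ℝ) 1 := by
    ext x; simp [Box01, Set.mem_Icc, Pi.le_def, forall_and]
  have hcomp : IsCompact (Box01 n) := by rw [hBox]; exact isCompact_Icc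
  have hbdd : BddAbove ((fun x => |MvPolynomial.eval x p|) '' Box01 n) :=
    (hcomp.image (MvPolynomial.continuous_eval p).abs).bddAbove
  have hle : ∀ x ∈ Box01 n, |MvPolynomial.eval x p| ≤ supNorm01 p := by
    intro x hx
    exact le_csSup hbdd ⟨x, hx, rfl⟩
  have hS0 : 0 ≤ supNorm01 p := by
    have h0 : (0 : Fin n → ℝ) ∈ Box01 n := by intro i; norm_num
    exact le_trans (abs_nonneg _) (hle 0 h0)
  set S := supNorm01 p with hSdef
  set D := Fintype.piFinset (fun i => Finset.range (α i + 1)) with hD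
  -- grid points lie in the box
  have hmem : ∀ β ∈ D, (fun i => (β i : ℝ) / (α i : ℝ)) ∈ Box01 n := by
    intro β hβ i
    have hβi : β i ≤ α i := by
      have := Fintype.mem_piFinset.mp hβ i
      simp only [Finset.mem_range] at this; omega
    constructor
    · positivity
    · rcases Nat.eq_zero_or_pos (α i) with h0 | hpos
      · have : β i = 0 := by omega
        simp [this, h0]
      · rw [div_le_one (by exact_mod_cast hpos)]
        exact_mod_cast hβi
  -- triangle inequality
  have htri : |MvPolynomial.coeff α p * ∏ i, ((α i).factorial : ℝ) / ((α i : ℝ))^(α i)|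
      ≤ 2^k * S := by
    rw [← keyId p k hp α hα, ← hD]
    have habs : ∀ β ∈ D, |(∏ i, ((-1:ℝ)^(α i - β i) * ((α i).choose (β i)))) *
        MvPolynomial.eval (fun i => (β i : ℝ) / (α i : ℝ)) p|
        ≤ (∏ i, (((α i).choose (β i) : ℕ) : ℝ)) * S := by
      intro β hβ
      rw [abs_mul]
      have h1 : |∏ i, ((-1:ℝ)^(α i - β i) * ((α i).choose (β i)))|
          = ∏ i, (((α i).choose (β i) : ℕ) : ℝ) := by
        rw [Finset.abs_prod]
        refine Finset.prod_congr rfl fun i _ => ?_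
        rw [abs_mul, abs_pow, abs_neg, abs_one, one_pow, one_mul, Nat.abs_cast]
      rw [h1]
      exact mul_le_mul_of_nonneg_left (hle _ (hmem β hβ))
        (Finset.prod_nonneg fun i _ => by positivity)
    calc |∑ β ∈ D, (∏ i, ((-1:ℝ)^(α i - β i) * ((α i).choose (β i)))) *
          MvPolynomial.eval (fun i => (β i : ℝ) / (α i : ℝ)) p|
        ≤ ∑ β ∈ D, |(∏ i, ((-1:ℝ)^(α i - β i) * ((α i).choose (β i)))) *
          MvPolynomial.eval (fun i => (β i : ℝ) / (α i : ℝ)) p| :=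
          Finset.abs_sum_le_sum_abs _ _
      _ ≤ ∑ β ∈ D, (∏ i, (((α i).choose (β i) : ℕ) : ℝ)) * S :=
          Finset.sum_le_sum habs
      _ = (∑ β ∈ D, ∏ i, (((α i).choose (β i) : ℕ) : ℝ)) * S := by
          rw [Finset.sum_mul]
      _ = 2^k * S := by
          congr 1
          rw [hD, ← Finset.prod_univ_sum (fun i => Finset.range (α i + 1))
            (fun i b => (((α i).choose b : ℕ) : ℝ))]
          have h2 : ∀ i : Fin n, ∑ b ∈ Finset.range (α i + 1), (((α i).choose b : ℕ) : ℝ)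
              = (2:ℝ)^(α i) := by
            intro i
            have := Nat.sum_range_choose (α i)
            exact_mod_cast congrArg (Nat.cast : ℕ → ℝ) this
          rw [Finset.prod_congr rfl (fun i _ => h2 i), Finset.prod_pow_eq_pow_sum, hα]
  -- positivity of P and the factorization A = P * Q
  set P : ℝ := ∏ i, ((α i).factorial : ℝ) / ((α i : ℝ))^(α i) with hPdef
  set Q : ℝ := ∏ i, ((α i : ℝ))^(α i) with hQdef
  have hfacpos : ∀ i : Fin n, (0:ℝ) < ((α i : ℝ))^(α i) := by
    intro i
    rcases Nat.eq_zero_or_pos (α i) with h0 | hpos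
    · simp [h0]
    · positivity
  have hP : 0 < P := Finset.prod_pos fun i _ => div_pos (by positivity) (hfacpos i)
  have hQ0 : 0 ≤ Q := Finset.prod_nonneg fun i _ => (hfacpos i).le
  have hA : ((∏ i, (α i).factorial : ℕ) : ℝ) = P * Q := by
    push_cast
    rw [hPdef, hQdef, ← Finset.prod_mul_distrib]
    refine Finset.prod_congr rfl fun i _ => ?_
    rw [div_mul_cancel₀]
    exact (hfacpos i).ne'
  -- Q ≤ e^k * k!
  have hQle : Q ≤ Real.exp 1 ^ k * (k.factorial : ℝ) := by
    have h1 : ∀ i : Fin n, ((α i : ℝ))^(α i) ≤ Real.exp 1 ^ (α i) * ((α i).factorial : ℝ) := by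
      intro i
      have h2 := Real.pow_div_factorial_le_exp (x := (α i : ℝ)) (by positivity) (α i)
      have h3 : Real.exp ((α i : ℝ)) = Real.exp 1 ^ (α i) := by
        rw [← Real.exp_nat_mul, mul_one]
      rw [div_le_iff₀ (by positivity)] at h2
      rw [← h3]
      linarith [h2]
    calc Q ≤ ∏ i, (Real.exp 1 ^ (α i) * ((α i).factorial : ℝ)) :=
          Finset.prod_le_prod (fun i _ => (hfacpos i).le) (fun i _ => h1 i)
      _ = Real.exp 1 ^ k * ((∏ i, (α i).factorial : ℕ) : ℝ) := by
          rw [Finset.prod_mul_distrib, Finset.prod_pow_eq_pow_sum, hα]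
          push_cast; ring
      _ ≤ Real.exp 1 ^ k * (k.factorial : ℝ) := by
          have hd : (∏ i, (α i).factorial) ∣ k.factorial := by
            rw [← hα]
            exact Nat.prod_factorial_dvd_factorial_sum _ _
          have := Nat.le_of_dvd k.factorial_pos hd
          exact mul_le_mul_of_nonneg_left (by exact_mod_cast this) (by positivity)
  -- assemble
  have hK : (0:ℝ) < (k.factorial : ℝ) := by exact_mod_cast k.factorial_pos
  rw [div_le_iff₀ hK]
  have h8 : |MvPolynomial.coeff α p| * P ≤ 2^k * S := by
    rw [← abs_of_pos hP, ← abs_mul]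
    exact htri
  calc |MvPolynomial.coeff α p| * ((∏ i, (α i).factorial : ℕ) : ℝ)
      = (|MvPolynomial.coeff α p| * P) * Q := by rw [hA]; ring
    _ ≤ (2^k * S) * Q := mul_le_mul_of_nonneg_right h8 hQ0
    _ ≤ (2^k * S) * (Real.exp 1 ^ k * (k.factorial : ℝ)) :=
        mul_le_mul_of_nonneg_left hQle (by positivity)
    _ = ((2 * Real.exp 1) ^ k * S) * (k.factorial : ℝ) := by rw [mul_pow]; ring
end

section
/- Let f be a real polynomial in n variables with deg f ≤ d, and write f = Σ_{k=0}^d p_k where p_k is the homogeneous component of f of degree k. Then for every 0 ≤ k ≤ d, sup_{x ∈ [0,1]ⁿ} |p_k(x)| ≤ (4e)^d · sup_{x ∈ [0,1]ⁿ} |f(x)|, where e is Euler's number. -/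
open MvPolynomial

section helpers
open Finset
lemma aux_eval_homog {n k : ℕ} {p : MvPolynomial (Fin n) ℝ} (hp : p.IsHomogeneous k)
    (t : ℝ) (x : Fin n → ℝ) :
    MvPolynomial.eval (fun i => t * x i) p = t ^ k * MvPolynomial.eval x p := by
  rw [MvPolynomial.eval_eq', MvPolynomial.eval_eq', Finset.mul_sum]
  apply Finset.sum_congr rfl
  intro d hd
  by_cases hc : MvPolynomial.coeff d p = 0
  · simp [hc]
  have hdeg : d.degree = k := by
    rw [Finsupp.degree_eq_weight_one]; exact hp hc
  have hsum : ∑ i, d i = k := by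
    rw [← hdeg, Finsupp.degree]
    exact (Finset.sum_subset (Finset.subset_univ _)
      (fun i _ hi => Finsupp.notMem_support_iff.mp hi)).symm
  simp only [mul_pow, Finset.prod_mul_distrib, Finset.prod_pow_eq_pow_sum, hsum]
  ring

lemma aux_box_eq (n : ℕ) : Box01 n = Set.Icc (0 : Fin n → ℝ) 1 := by
  ext x; simp [Box01, Set.mem_Icc, Pi.le_def, forall_and]

lemma aux_bdd {n : ℕ} (f : MvPolynomial (Fin n) ℝ) :
    BddAbove ((fun x => |MvPolynomial.eval x f|) '' Box01 n) := by
  rw [aux_box_eq]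
  exact (isCompact_Icc.image (continuous_abs.comp f.continuous_eval)).bddAbove

lemma aux_le_sup {n : ℕ} (f : MvPolynomial (Fin n) ℝ) {x : Fin n → ℝ} (hx : x ∈ Box01 n) :
    |MvPolynomial.eval x f| ≤ supNorm01 f :=
  le_csSup (aux_bdd f) ⟨x, hx, rfl⟩

lemma aux_sup_nonneg {n : ℕ} (f : MvPolynomial (Fin n) ℝ) : 0 ≤ supNorm01 f := by
  have h0 : (0 : Fin n → ℝ) ∈ Box01 n := fun i => by norm_num
  exact le_trans (abs_nonneg _) (aux_le_sup f h0)

lemma aux_coeff_prod_bound (u : Finset ℕ) (y : ℕ → ℝ) (hy : ∀ i ∈ u, |y i| ≤ 1) :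
    ∀ k, |(∏ i ∈ u, (Polynomial.X - Polynomial.C (y i))).coeff k| ≤ 2 ^ u.card := by
  induction u using Finset.induction_on with
  | empty =>
    intro k
    simp only [Finset.prod_empty, Polynomial.coeff_one]
    split <;> simp
  | @insert a u ha ih =>
    intro k
    rw [Finset.prod_insert ha, sub_mul, Finset.card_insert_of_notMem ha]
    have hya : |y a| ≤ 1 := hy a (Finset.mem_insert_self a u)
    have ih' := ih (fun i hi => hy i (Finset.mem_insert_of_mem hi))
    have hXQ : |(Polynomial.X * ∏ i ∈ u, (Polynomial.X - Polynomial.C (y i))).coeff k| ≤ 2 ^ u.card := by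
      cases k with
      | zero => simp [Polynomial.mul_coeff_zero]
      | succ m => rw [Polynomial.coeff_X_mul]; exact ih' m
    have hCQ : |(Polynomial.C (y a) * ∏ i ∈ u, (Polynomial.X - Polynomial.C (y i))).coeff k| ≤ 2 ^ u.card := by
      rw [Polynomial.coeff_C_mul, abs_mul]
      calc |y a| * |(∏ i ∈ u, (Polynomial.X - Polynomial.C (y i))).coeff k| ≤ 1 * 2 ^ u.card :=
            mul_le_mul hya (ih' k) (abs_nonneg _) zero_le_one
        _ = 2 ^ u.card := one_mul _
    calc |((Polynomial.X * ∏ i ∈ u, (Polynomial.X - Polynomial.C (y i))) - Polynomial.C (y a) * ∏ i ∈ u, (Polynomial.X - Polynomial.C (y i))).coeff k|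
        ≤ _ + _ := by rw [Polynomial.coeff_sub]; exact abs_sub (_) (_)
      _ ≤ 2 ^ u.card + 2 ^ u.card := add_le_add hXQ hCQ
      _ = 2 ^ (u.card + 1) := by ring

lemma aux_pow_le_exp_factorial (d : ℕ) :
    ((d:ℝ) + 1) ^ d ≤ Real.exp 1 ^ d * (Nat.factorial d) := by
  induction d with
  | zero => norm_num
  | succ d ih =>
    have h1 : ((d:ℝ) + 2) ^ (d+1) ≤ Real.exp 1 * ((d:ℝ) + 1) ^ (d+1) := by
      have hb : (0:ℝ) < (d:ℝ) + 1 := by positivity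
      have key : ((d:ℝ) + 2) ^ (d+1) = ((1 + 1/((d:ℝ)+1)) * ((d:ℝ)+1)) ^ (d+1) := by
        field_simp; ring
      rw [key, mul_pow]
      have h2 : (1 + 1/((d:ℝ)+1)) ^ (d+1) ≤ Real.exp 1 := by
        have h3 : (1:ℝ) + 1/((d:ℝ)+1) ≤ Real.exp (1/((d:ℝ)+1)) := by
          have := Real.add_one_le_exp (1/((d:ℝ)+1)); linarith
        calc (1 + 1/((d:ℝ)+1)) ^ (d+1) ≤ Real.exp (1/((d:ℝ)+1)) ^ (d+1) := by
              apply pow_le_pow_left₀ (by positivity) h3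
          _ = Real.exp ((d+1) * (1/((d:ℝ)+1))) := by
              rw [← Real.exp_nat_mul]; push_cast; ring_nf
          _ = Real.exp 1 := by congr 1; push_cast; field_simp
      exact mul_le_mul_of_nonneg_right h2 (by positivity)
    push_cast
    calc ((d:ℝ) + 1 + 1) ^ (d+1) = ((d:ℝ)+2)^(d+1) := by ring_nf
      _ ≤ Real.exp 1 * ((d:ℝ)+1) ^ (d+1) := h1
      _ = Real.exp 1 * (((d:ℝ)+1) * ((d:ℝ)+1)^d) := by ring
      _ ≤ Real.exp 1 * (((d:ℝ)+1) * (Real.exp 1 ^ d * Nat.factorial d)) := by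
          apply mul_le_mul_of_nonneg_left _ (Real.exp_pos 1).le
          exact mul_le_mul_of_nonneg_left ih (by positivity)
      _ = Real.exp 1 ^ (d+1) * ((d+1) * Nat.factorial d) := by push_cast; ring
      _ = Real.exp 1 ^ (d+1) * Nat.factorial (d+1) := by rw [Nat.factorial_succ]; push_cast; ring

lemma aux_prod_nat1 (j : ℕ) : ∏ i ∈ range j, (j - i) = Nat.factorial j := by
  rw [← Finset.prod_range_add_one_eq_factorial j, ← Finset.prod_range_reflect (fun i => i + 1) j]
  apply Finset.prod_congr rfl
  intro i hi
  rw [Finset.mem_range] at hi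
  omega

lemma aux_prod_nat2 (d j : ℕ) : ∏ i ∈ Ico (j+1) (d+1), (i - j) = Nat.factorial (d - j) := by
  rw [Finset.prod_Ico_eq_prod_range, ← Finset.prod_range_add_one_eq_factorial (d - j)]
  have h : d + 1 - (j + 1) = d - j := by omega
  rw [h]
  apply Finset.prod_congr rfl
  intro i _
  omega

lemma aux_prod_dist (d j : ℕ) (hj : j ≤ d) :
    ∏ i ∈ (Finset.range (d+1)).erase j, |(j:ℝ) - (i:ℝ)|
      = (Nat.factorial j) * (Nat.factorial (d - j)) := by
  have hsplit : (Finset.range (d+1)).erase j = range j ∪ Ico (j+1) (d+1) := by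
    ext i
    simp only [Finset.mem_erase, Finset.mem_range, Finset.mem_union, Finset.mem_Ico]
    omega
  have hdisj : Disjoint (range j) (Ico (j+1) (d+1)) := by
    rw [Finset.disjoint_left]
    intro i hi1 hi2
    rw [Finset.mem_range] at hi1
    rw [Finset.mem_Ico] at hi2
    omega
  rw [hsplit, Finset.prod_union hdisj]
  have h1 : ∏ i ∈ range j, |(j:ℝ) - (i:ℝ)| = (Nat.factorial j : ℝ) := by
    rw [← aux_prod_nat1 j, Nat.cast_prod]
    apply Finset.prod_congr rfl
    intro i hi
    rw [Finset.mem_range] at hi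
    rw [Nat.cast_sub hi.le]
    exact abs_of_nonneg (sub_nonneg.2 (Nat.cast_le.2 hi.le))
  have h2 : ∏ i ∈ Ico (j+1) (d+1), |(j:ℝ) - (i:ℝ)| = (Nat.factorial (d - j) : ℝ) := by
    rw [← aux_prod_nat2 d j, Nat.cast_prod]
    apply Finset.prod_congr rfl
    intro i hi
    rw [Finset.mem_Ico] at hi
    have hji : j ≤ i := by omega
    rw [Nat.cast_sub hji, abs_sub_comm]
    exact abs_of_nonneg (sub_nonneg.2 (Nat.cast_le.2 hji))
  rw [h1, h2]
end helpers

/-- bound on homogeneous components on `[0,1]^n`. -/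
theorem stmt16 {n : ℕ} (f : MvPolynomial (Fin n) ℝ) (d : ℕ) (hd : f.totalDegree ≤ d) :
    ∀ k ≤ d,
      supNorm01 (MvPolynomial.homogeneousComponent k f)
        ≤ (4 * Real.exp 1) ^ d * supNorm01 f := by

  intro k hk
  set M := supNorm01 f with hM
  have hMnn : 0 ≤ M := aux_sup_nonneg f
  have hRHSnn : 0 ≤ (4 * Real.exp 1) ^ d * M := by positivity
  apply Real.sSup_le _ hRHSnn
  rintro r ⟨x, hx, rfl⟩
  simp only
  -- setup
  set v : ℕ → ℝ := fun j => (j : ℝ) / ((d:ℝ) + 1) with hv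
  set s : Finset ℕ := Finset.range (d+1) with hs
  have hdpos : (0:ℝ) < (d:ℝ) + 1 := by positivity
  have hinj : Set.InjOn v s := by
    intro a _ b _ h
    simp only [hv, div_left_inj' hdpos.ne'] at h
    exact_mod_cast h
  set q : Polynomial ℝ :=
    ∑ m ∈ Finset.range (d+1),
      Polynomial.C (MvPolynomial.eval x (MvPolynomial.homogeneousComponent m f))
        * Polynomial.X ^ m with hq
  have hcoeff : ∀ m, m ≤ d →
      q.coeff m = MvPolynomial.eval x (MvPolynomial.homogeneousComponent m f) := by
    intro m hm
    rw [hq, Polynomial.finset_sum_coeff]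
    rw [Finset.sum_eq_single m]
    · simp
    · intro b _ hbm
      simp [Polynomial.coeff_C_mul, Polynomial.coeff_X_pow, Ne.symm hbm]
    · intro hms
      exact absurd (Finset.mem_range.2 (Nat.lt_succ_of_le hm)) hms
  have hfsum : ∑ m ∈ Finset.range (d+1), MvPolynomial.homogeneousComponent m f = f := by
    calc ∑ m ∈ Finset.range (d+1), MvPolynomial.homogeneousComponent m f
        = ∑ m ∈ Finset.range (f.totalDegree+1), MvPolynomial.homogeneousComponent m f := by
          apply (Finset.sum_subset (Finset.range_subset_range.2 (Nat.succ_le_succ hd)) _).symm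
          intro m _ hm
          rw [Finset.mem_range, not_lt] at hm
          exact MvPolynomial.homogeneousComponent_eq_zero m f (Nat.lt_of_succ_le hm)
      _ = f := MvPolynomial.sum_homogeneousComponent f
  have heval : ∀ t : ℝ, q.eval t = MvPolynomial.eval (fun i => t * x i) f := by
    intro t
    conv_rhs => rw [← hfsum]
    rw [map_sum, hq, Polynomial.eval_finset_sum]
    apply Finset.sum_congr rfl
    intro m _
    rw [aux_eval_homog (MvPolynomial.homogeneousComponent_isHomogeneous m f) t x,
      Polynomial.eval_mul, Polynomial.eval_C, Polynomial.eval_pow, Polynomial.eval_X]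
    ring
  have hnat : q.natDegree ≤ d := by
    apply Polynomial.natDegree_sum_le_of_forall_le
    intro m hm
    exact le_trans (Polynomial.natDegree_C_mul_X_pow_le _ _)
      (Nat.lt_succ_iff.mp (Finset.mem_range.mp hm))
  have hdeg : q.degree < ((s.card : ℕ) : WithBot ℕ) := by
    rw [hs, Finset.card_range]
    calc q.degree ≤ (q.natDegree : WithBot ℕ) := Polynomial.degree_le_natDegree
      _ < ((d+1 : ℕ) : WithBot ℕ) := by exact_mod_cast Nat.lt_succ_of_le hnat
  have hinterp := Lagrange.eq_interpolate hinj hdeg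
  -- coefficient expansion
  have hcoeffsum : q.coeff k = ∑ j ∈ s, q.eval (v j) * (Lagrange.basis s v j).coeff k := by
    conv_lhs => rw [hinterp]
    rw [Lagrange.interpolate_apply, Polynomial.finset_sum_coeff]
    apply Finset.sum_congr rfl
    intro j _
    rw [Polynomial.coeff_C_mul]
  -- per-node bound
  have hnode : ∀ j ∈ s, |q.eval (v j)| ≤ M := by
    intro j hj
    rw [Finset.mem_range, Nat.lt_succ_iff] at hj
    have hvj0 : 0 ≤ v j := by positivity
    have hvj1 : v j ≤ 1 := by
      rw [hv]; rw [div_le_one hdpos]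
      have : (j:ℝ) ≤ d := Nat.cast_le.2 hj
      linarith
    rw [heval]
    apply aux_le_sup f
    intro i
    constructor
    · exact mul_nonneg hvj0 (hx i).1
    · exact mul_le_one₀ hvj1 (hx i).1 (hx i).2
  -- basis coefficient bound
  have hbasisbd : ∀ j ∈ s, |(Lagrange.basis s v j).coeff k|
      ≤ ((d:ℝ)+1) ^ d / ((Nat.factorial j) * (Nat.factorial (d - j))) * 2 ^ d := by
    intro j hj
    have hjd : j ≤ d := Nat.lt_succ_iff.mp (Finset.mem_range.mp hj)
    have hbasis : Lagrange.basis s v j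
        = Polynomial.C (∏ i ∈ s.erase j, (v j - v i)⁻¹)
          * ∏ i ∈ s.erase j, (Polynomial.X - Polynomial.C (v i)) := by
      rw [Lagrange.basis]
      simp only [Lagrange.basisDivisor]
      rw [Finset.prod_mul_distrib, ← map_prod]
    rw [hbasis, Polynomial.coeff_C_mul, abs_mul]
    have hP : |(∏ i ∈ s.erase j, (Polynomial.X - Polynomial.C (v i))).coeff k|
        ≤ 2 ^ d := by
      have hcard : (s.erase j).card = d := by
        rw [Finset.card_erase_of_mem hj, hs, Finset.card_range]
        omega
      have := aux_coeff_prod_bound (s.erase j) v ?_ k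
      · rw [hcard] at this; exact this
      · intro i hi
        have hid : i ≤ d := Nat.lt_succ_iff.mp
          (Finset.mem_range.mp (Finset.mem_of_mem_erase hi))
        rw [hv, abs_div, abs_of_nonneg (Nat.cast_nonneg i : (0:ℝ) ≤ i),
          abs_of_pos hdpos, div_le_one hdpos]
        have : (i:ℝ) ≤ d := Nat.cast_le.2 hid
        linarith
    have hC : |∏ i ∈ s.erase j, (v j - v i)⁻¹|
        = ((d:ℝ)+1) ^ d / ((Nat.factorial j) * (Nat.factorial (d - j))) := by
      rw [Finset.abs_prod]
      have hterm : ∀ i ∈ s.erase j, |(v j - v i)⁻¹| = ((d:ℝ)+1) / |(j:ℝ) - (i:ℝ)| := by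
        intro i _
        rw [abs_inv, hv]
        rw [div_sub_div_same, abs_div, abs_of_pos hdpos, inv_div]
      rw [Finset.prod_congr rfl hterm, Finset.prod_div_distrib, Finset.prod_const]
      rw [aux_prod_dist d j hjd]
      have hcard : (s.erase j).card = d := by
        rw [Finset.card_erase_of_mem hj, hs, Finset.card_range]
        omega
      rw [hcard]
    rw [hC]
    apply mul_le_mul_of_nonneg_left hP
    positivity
  -- combine
  have hfacpos : ∀ j : ℕ, (0:ℝ) < (Nat.factorial j : ℝ) := fun j => by
    exact_mod_cast Nat.factorial_pos j
  have hbinom : ∑ j ∈ s, (1:ℝ) / ((Nat.factorial j : ℝ) * (Nat.factorial (d - j) : ℝ))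
      = 2 ^ d / (Nat.factorial d : ℝ) := by
    have hterm : ∀ j ∈ s, (1:ℝ) / ((Nat.factorial j : ℝ) * (Nat.factorial (d - j) : ℝ))
        = (d.choose j : ℝ) / (Nat.factorial d : ℝ) := by
      intro j hj
      have hjd : j ≤ d := Nat.lt_succ_iff.mp (Finset.mem_range.mp hj)
      rw [Nat.cast_choose ℝ hjd]
      rw [eq_div_iff (ne_of_gt (hfacpos d))]
      field_simp
    rw [Finset.sum_congr rfl hterm, ← Finset.sum_div]
    norm_cast
    rw [hs, Nat.sum_range_choose]
  have hmain : |q.coeff k| ≤ M * (2 ^ d * ((d:ℝ)+1) ^ d * (2 ^ d / (Nat.factorial d : ℝ))) := by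
    rw [hcoeffsum]
    calc |∑ j ∈ s, q.eval (v j) * (Lagrange.basis s v j).coeff k|
        ≤ ∑ j ∈ s, |q.eval (v j) * (Lagrange.basis s v j).coeff k| :=
          Finset.abs_sum_le_sum_abs _ _
      _ ≤ ∑ j ∈ s, M * (((d:ℝ)+1) ^ d / ((Nat.factorial j : ℝ) * (Nat.factorial (d - j) : ℝ))
            * 2 ^ d) := by
          apply Finset.sum_le_sum
          intro j hj
          rw [abs_mul]
          apply mul_le_mul (hnode j hj) (hbasisbd j hj) (abs_nonneg _) hMnn
      _ = ∑ j ∈ s, M * (2 ^ d * ((d:ℝ)+1) ^ d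
            * ((1:ℝ) / ((Nat.factorial j : ℝ) * (Nat.factorial (d - j) : ℝ)))) := by
          apply Finset.sum_congr rfl
          intro j _
          ring
      _ = M * (2 ^ d * ((d:ℝ)+1) ^ d
            * ∑ j ∈ s, (1:ℝ) / ((Nat.factorial j : ℝ) * (Nat.factorial (d - j) : ℝ))) := by
          rw [← Finset.mul_sum, ← Finset.mul_sum]
      _ = M * (2 ^ d * ((d:ℝ)+1) ^ d * (2 ^ d / (Nat.factorial d : ℝ))) := by
          rw [hbinom]
  have hkey : (2:ℝ) ^ d * ((d:ℝ)+1) ^ d * ((2:ℝ) ^ d / (Nat.factorial d : ℝ))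
      ≤ (4 * Real.exp 1) ^ d := by
    have hfd := hfacpos d
    have heq : (2:ℝ) ^ d * ((d:ℝ)+1) ^ d * ((2:ℝ) ^ d / (Nat.factorial d : ℝ))
        = (4:ℝ) ^ d * (((d:ℝ)+1) ^ d / (Nat.factorial d : ℝ)) := by
      rw [show (4:ℝ) ^ d = 2 ^ d * 2 ^ d by rw [← mul_pow]; norm_num]
      ring
    rw [heq, mul_pow]
    apply mul_le_mul_of_nonneg_left _ (by positivity)
    rw [div_le_iff₀ hfd]
    exact aux_pow_le_exp_factorial d
  calc |MvPolynomial.eval x (MvPolynomial.homogeneousComponent k f)|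
      = |q.coeff k| := by rw [hcoeff k hk]
    _ ≤ M * (2 ^ d * ((d:ℝ)+1) ^ d * (2 ^ d / (Nat.factorial d : ℝ))) := hmain
    _ ≤ M * (4 * Real.exp 1) ^ d := mul_le_mul_of_nonneg_left hkey hMnn
    _ = (4 * Real.exp 1) ^ d * M := mul_comm _ _
end
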